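/- arXiv:0804.1963 — 4 statements merged into one kernel-verified Lean document; each statement's English description precedes it below -/
import Mathlib

section
/- Let X be a Banach space and (K_n)_{n∈ℕ} a sequence of compact operators on X with ‖K_n - K‖_{B(X,X)} → 0 for some operator K on X. Then for every λ ≠ 0 which is an eigenvalue of K, there exist a subsequence (K_{n_j}), numbers λ_{n_j} and vectors f_{n_j} ∈ X with ‖f_{n_j}‖_X = 1 such that K_{n_j} f_{n_j} = λ_{n_j} f_{n_j}, λ_{n_j} → λ as j → ∞, and f_{n_j} converges in X to some vector f with Kf = λf and ‖f‖_X = 1. -/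
open Filter Topology Metric Set

set_option linter.unusedSectionVars false
set_option maxHeartbeats 1000000

namespace Statement7Aux

variable {X : Type*} [NormedAddCommGroup X] [NormedSpace ℂ X] [CompleteSpace X]

/-- Image of a bounded sequence under a compact operator has a convergent subsequence. -/
lemma subseq_conv (T : X →L[ℂ] X) (hT : IsCompactOperator T) (C : ℝ)
    (u : ℕ → X) (hu : ∀ n, ‖u n‖ ≤ C) :
    ∃ φ : ℕ → ℕ, StrictMono φ ∧ ∃ y : X, Tendsto (fun n => T (u (φ n))) atTop (𝓝 y) := by
  obtain ⟨S, hS, hSsub⟩ :=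
    IsCompactOperator.image_closedBall_subset_compact (f := (T : X →ₗ[ℂ] X)) hT C
  have hmem : ∀ n, T (u n) ∈ S := fun n =>
    hSsub ⟨u n, by simpa [Metric.mem_closedBall, dist_zero_right] using hu n, rfl⟩
  obtain ⟨y, -, φ, hφ, hlim⟩ := hS.tendsto_subseq hmem
  exact ⟨φ, hφ, y, hlim⟩

/-- Riesz-type lemma: unit vector in `V` almost orthogonal to a closed subspace `G ≤ V`. -/
lemma riesz_aux (V G : Submodule ℂ X) (hGV : G ≤ V) (hG : IsClosed (G : Set X))
    (v : X) (hvV : v ∈ V) (hvG : v ∉ G) :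
    ∃ u : X, u ∈ V ∧ ‖u‖ = 1 ∧ ∀ y ∈ G, (1:ℝ)/2 ≤ ‖u - y‖ := by
  have hGn : (G : Set X).Nonempty := ⟨0, G.zero_mem⟩
  set d := Metric.infDist v (G : Set X) with hd
  have hdpos : 0 < d := (hG.notMem_iff_infDist_pos hGn).1 hvG
  obtain ⟨y₀, hy₀G, hy₀⟩ := (Metric.infDist_lt_iff hGn).1 (show d < 2 * d by linarith)
  have hvy : v - y₀ ≠ 0 := sub_ne_zero.2 (fun h => hvG (h ▸ hy₀G))
  set t : ℝ := ‖v - y₀‖ with ht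
  have htpos : 0 < t := norm_pos_iff.2 hvy
  have htle : t ≤ 2 * d := by
    rw [ht, ← dist_eq_norm]
    exact hy₀.le
  refine ⟨(t : ℂ)⁻¹ • (v - y₀), Submodule.smul_mem _ _ (V.sub_mem hvV (hGV hy₀G)), ?_, ?_⟩
  · rw [norm_smul, norm_inv, Complex.norm_real, Real.norm_eq_abs, abs_of_pos htpos, ← ht,
      inv_mul_cancel₀ htpos.ne']
  · intro y hy
    have hmem : y₀ + (t : ℂ) • y ∈ G := G.add_mem hy₀G (G.smul_mem _ hy)
    have hge : d ≤ ‖v - (y₀ + (t : ℂ) • y)‖ := by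
      simpa [dist_eq_norm] using Metric.infDist_le_dist_of_mem hmem
    have h1 : (t:ℂ)⁻¹ • (v - y₀) - y = (t:ℂ)⁻¹ • (v - (y₀ + (t:ℂ) • y)) := by
      have htne : (t:ℂ) ≠ 0 := by
        simpa using htpos.ne'
      rw [smul_sub, smul_sub, smul_add, smul_smul, inv_mul_cancel₀ htne, one_smul]
      abel
    rw [h1, norm_smul, norm_inv, Complex.norm_real, Real.norm_eq_abs, abs_of_pos htpos]
    have h2 : d / (2*d) ≤ d / t := div_le_div_of_nonneg_left hdpos.le htpos htle
    have h3 : d / (2*d) = 1/2 := by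
      rw [eq_div_iff (by norm_num : (2:ℝ) ≠ 0)]
      field_simp
    have h4 : d / t ≤ t⁻¹ * ‖v - (y₀ + (t:ℂ) • y)‖ := by
      rw [div_eq_inv_mul]
      exact mul_le_mul_of_nonneg_left hge (inv_nonneg.2 htpos.le)
    linarith

/-- An injective `μ•1 - T` with `T` compact and `μ ≠ 0` is bounded below. -/
lemma bounded_below (T : X →L[ℂ] X) (hT : IsCompactOperator T) (μ : ℂ) (hμ : μ ≠ 0)
    (hinj : ∀ x : X, μ • x - T x = 0 → x = 0) :
    ∃ c : ℝ, 0 < c ∧ ∀ x : X, c * ‖x‖ ≤ ‖μ • x - T x‖ := by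
  by_contra hcon
  push_neg at hcon
  have hseq : ∀ n : ℕ, ∃ u : X, ‖u‖ = 1 ∧ ‖μ • u - T u‖ < ((n : ℝ)+1)⁻¹ := by
    intro n
    obtain ⟨x, hx⟩ := hcon ((n+1:ℝ)⁻¹) (by positivity)
    have hx0 : x ≠ 0 := by
      rintro rfl
      simp at hx
    have hnx : (0:ℝ) < ‖x‖ := norm_pos_iff.2 hx0
    refine ⟨(‖x‖:ℂ)⁻¹ • x, ?_, ?_⟩
    · rw [norm_smul, norm_inv, Complex.norm_real, Real.norm_eq_abs, abs_of_pos hnx,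
        inv_mul_cancel₀ hnx.ne']
    · have h1 : μ • ((‖x‖:ℂ)⁻¹ • x) - T ((‖x‖:ℂ)⁻¹ • x) = (‖x‖:ℂ)⁻¹ • (μ • x - T x) := by
        rw [map_smul, smul_sub, smul_comm]
      rw [h1, norm_smul, norm_inv, Complex.norm_real, Real.norm_eq_abs, abs_of_pos hnx]
      calc ‖x‖⁻¹ * ‖μ • x - T x‖ < ‖x‖⁻¹ * (((n:ℝ)+1)⁻¹ * ‖x‖) :=
            mul_lt_mul_of_pos_left hx (inv_pos.2 hnx)
        _ = ((n:ℝ)+1)⁻¹ := by field_simp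
  choose u hu1 hu2 using hseq
  obtain ⟨φ, hφ, y, hy⟩ := subseq_conv T hT 1 u (fun n => (hu1 n).le)
  have hS0 : Tendsto (fun n => μ • u (φ n) - T (u (φ n))) atTop (𝓝 0) := by
    refine squeeze_zero_norm (f := fun n => μ • u (φ n) - T (u (φ n))) (a := fun n => ((n:ℝ)+1)⁻¹) (fun n => ?_) ?_
    · refine le_trans (hu2 (φ n)).le ?_
      have : (n:ℝ) ≤ (φ n : ℝ) := by exact_mod_cast hφ.le_apply
      rw [inv_le_inv₀ (by positivity) (by positivity)]
      linarith
    · exact_mod_cast (tendsto_one_div_add_atTop_nhds_zero_nat (𝕜 := ℝ)).congr (fun n => (one_div _))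
  have hμu : Tendsto (fun n => μ • u (φ n)) atTop (𝓝 y) := by
    have := hS0.add hy
    simpa using this
  have hulim : Tendsto (fun n => u (φ n)) atTop (𝓝 (μ⁻¹ • y)) := by
    have := hμu.const_smul μ⁻¹
    simpa [smul_smul, inv_mul_cancel₀ hμ] using this
  have hnorm : ‖μ⁻¹ • y‖ = 1 := by
    have h1 : Tendsto (fun n => ‖u (φ n)‖) atTop (𝓝 ‖μ⁻¹ • y‖) := hulim.norm
    have h2 : Tendsto (fun n => ‖u (φ n)‖) atTop (𝓝 1) := by
      simpa [hu1] using tendsto_const_nhds (α := ℝ) (x := 1) (f := atTop (α := ℕ))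
    exact tendsto_nhds_unique h1 h2
  have hzero : μ • (μ⁻¹ • y) - T (μ⁻¹ • y) = 0 := by
    have hcont : Tendsto (fun n => μ • u (φ n) - T (u (φ n))) atTop
        (𝓝 (μ • (μ⁻¹ • y) - T (μ⁻¹ • y))) :=
      (hulim.const_smul μ).sub ((T.continuous.tendsto _).comp hulim)
    exact tendsto_nhds_unique hcont hS0
  have := hinj _ hzero
  rw [this] at hnorm
  simp at hnorm

/-- A bounded-below operator has closed range. -/
lemma closed_range_aux (S : X →L[ℂ] X) (c : ℝ) (hc : 0 < c)
    (hlb : ∀ x : X, c * ‖x‖ ≤ ‖S x‖) : IsClosed ((LinearMap.range (S : X →ₗ[ℂ] X) : Submodule ℂ X) : Set X) := by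
  have hanti : AntilipschitzWith (⟨c, hc.le⟩ : NNReal)⁻¹ S := by
    apply ContinuousLinearMap.antilipschitz_of_bound
    intro x
    have := hlb x
    change ‖x‖ ≤ c⁻¹ * ‖S x‖
    rw [le_inv_mul_iff₀ (by exact_mod_cast hc)]
    exact_mod_cast this
  have h2 := hanti.isClosed_range S.uniformContinuous
  have h3 : ((LinearMap.range (S : X →ₗ[ℂ] X) : Submodule ℂ X) : Set X) = Set.range S := by
    ext x; simp [LinearMap.mem_range]
  rw [h3]
  exact h2

/-- Fredholm alternative, surjectivity part: if `T` is compact, `μ ≠ 0` and `μ•1 - T` is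
injective, then it is surjective. -/
lemma fredholm (T : X →L[ℂ] X) (hT : IsCompactOperator T) (μ : ℂ) (hμ : μ ≠ 0)
    (hinj : Function.Injective ⇑(μ • (1 : X →L[ℂ] X) - T)) :
    Function.Surjective ⇑(μ • (1 : X →L[ℂ] X) - T) := by
  set S : X →L[ℂ] X := μ • (1 : X →L[ℂ] X) - T with hSdef
  have hSapp : ∀ x : X, S x = μ • x - T x := fun x => by simp [hSdef]
  -- injectivity of powers
  have hinjpow : ∀ k : ℕ, Function.Injective ⇑(S ^ k) := by
    intro k
    induction k with
    | zero => simpa using Function.injective_id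
    | succ k ih =>
      have h1 : ∀ x : X, (S ^ (k+1)) x = (S ^ k) (S x) := fun x => by
        rw [pow_succ, ContinuousLinearMap.mul_apply]
      intro a b hab
      rw [h1, h1] at hab
      exact hinj (ih hab)
  -- decomposition of powers
  have hdec : ∀ k : ℕ, ∃ C : X →L[ℂ] X, IsCompactOperator C ∧
      S ^ (k+1) = μ^(k+1) • (1 : X →L[ℂ] X) - C := by
    intro k
    induction k with
    | zero => exact ⟨T, hT, by rw [pow_one, pow_one, hSdef]⟩
    | succ k ih =>
      obtain ⟨C, hC, hCe⟩ := ih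
      refine ⟨μ^(k+1) • T + μ • C - C.comp T, ?_, ?_⟩
      · have h1 : IsCompactOperator ⇑(μ^(k+1) • T) := by
          have := hT.smul (μ^(k+1))
          simpa using this
        have h2 : IsCompactOperator ⇑(μ • C) := by
          have := hC.smul μ
          simpa using this
        have h3 : IsCompactOperator ⇑(C.comp T) := hC.comp_clm T
        have := (h1.add h2).sub h3
        simpa using this
      · ext x
        have h1 : (S^(k+2)) x = (S^(k+1)) (S x) := by
          rw [pow_succ, ContinuousLinearMap.mul_apply]
        rw [h1, hCe]
        simp only [ContinuousLinearMap.sub_apply, ContinuousLinearMap.smul_apply,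
          ContinuousLinearMap.one_apply, ContinuousLinearMap.add_apply,
          ContinuousLinearMap.coe_comp', Function.comp_apply, hSapp, map_sub, map_smul,
          smul_sub, smul_smul, ← pow_succ]
        module
  -- ranges
  set R : ℕ → Submodule ℂ X := fun k => LinearMap.range ((S ^ k : X →L[ℂ] X) : X →ₗ[ℂ] X) with hRdef
  have hRmem : ∀ (k : ℕ) (x : X), (S ^ k) x ∈ R k := fun k x => ⟨x, rfl⟩
  have hRmono : ∀ a b : ℕ, a ≤ b → R b ≤ R a := by
    intro a b hab
    rintro x ⟨w, rfl⟩
    refine ⟨(S ^ (b - a)) w, ?_⟩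
    rw [ContinuousLinearMap.coe_coe, ContinuousLinearMap.coe_coe, ← ContinuousLinearMap.mul_apply, ← pow_add]
    congr 2
    omega
  have hRS : ∀ (k : ℕ) (x : X), x ∈ R k → S x ∈ R (k+1) := by
    rintro k x ⟨w, rfl⟩
    refine ⟨w, ?_⟩
    rw [ContinuousLinearMap.coe_coe, ContinuousLinearMap.coe_coe, pow_succ', ContinuousLinearMap.mul_apply]
  have hRclosed : ∀ k : ℕ, IsClosed ((R (k+1) : Submodule ℂ X) : Set X) := by
    intro k
    obtain ⟨C, hC, hCe⟩ := hdec k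
    have happ : ∀ x : X, (S^(k+1)) x = μ^(k+1) • x - C x := fun x => by
      rw [hCe]; simp
    have hinjk : ∀ x : X, μ^(k+1) • x - C x = 0 → x = 0 := by
      intro x hx
      rw [← happ] at hx
      exact hinjpow (k+1) (by simpa using hx)
    obtain ⟨c, hc, hlb⟩ := bounded_below C hC (μ^(k+1)) (pow_ne_zero _ hμ) hinjk
    exact closed_range_aux (S^(k+1)) c hc (fun x => by rw [happ]; exact hlb x)
  -- suppose not surjective
  by_contra hsurj
  obtain ⟨v, hv⟩ := not_forall.mp hsurj
  have hnotin : ∀ k : ℕ, (S ^ k) v ∉ R (k+1) := by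
    rintro k ⟨w, hw⟩
    have h1 : (S ^ k) (S w) = (S ^ k) v := by
      rw [← hw, ContinuousLinearMap.coe_coe, pow_succ, ContinuousLinearMap.mul_apply]
    exact hv ⟨w, hinjpow k h1⟩
  have hexu : ∀ k : ℕ, ∃ u : X, u ∈ R k ∧ ‖u‖ = 1 ∧ ∀ y ∈ R (k+1), (1:ℝ)/2 ≤ ‖u - y‖ :=
    fun k => riesz_aux (R k) (R (k+1)) (hRmono k (k+1) k.le_succ) (hRclosed k)
      ((S ^ k) v) (hRmem k v) (hnotin k)
  choose u hu1 hu2 hu3 using hexu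
  -- pairwise estimate
  have hpair : ∀ m n : ℕ, m < n → ‖μ‖/2 ≤ ‖T (u m) - T (u n)‖ := by
    intro m n hmn
    have hw : S (u m) + μ • (u n) - S (u n) ∈ R (m+1) := by
      refine Submodule.sub_mem _ (Submodule.add_mem _ ?_ ?_) ?_
      · exact hRS m (u m) (hu1 m)
      · exact hRmono (m+1) n hmn (Submodule.smul_mem _ _ (hu1 n))
      · exact hRmono (m+1) (n+1) (by omega) (hRS n (u n) (hu1 n))
    set w := S (u m) + μ • (u n) - S (u n) with hwdef
    have heq : T (u m) - T (u n) = μ • (u m - μ⁻¹ • w) := by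
      rw [smul_sub, smul_smul, mul_inv_cancel₀ hμ, one_smul, hwdef]
      have h1 : T (u m) = μ • u m - S (u m) := by rw [hSapp]; abel
      have h2 : T (u n) = μ • u n - S (u n) := by rw [hSapp]; abel
      rw [h1, h2]
      abel
    rw [heq, norm_smul]
    have h3 : (1:ℝ)/2 ≤ ‖u m - μ⁻¹ • w‖ := hu3 m _ (Submodule.smul_mem _ _ hw)
    calc ‖μ‖/2 = ‖μ‖ * (1/2) := by ring
      _ ≤ ‖μ‖ * ‖u m - μ⁻¹ • w‖ := by
          apply mul_le_mul_of_nonneg_left h3 (norm_nonneg _)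
  -- contradiction with compactness
  obtain ⟨φ, hφ, y, hy⟩ := subseq_conv T hT 1 u (fun n => (hu2 n).le)
  have hc := hy.cauchySeq
  obtain ⟨N, hN⟩ := Metric.cauchySeq_iff.1 hc (‖μ‖/2) (half_pos (norm_pos_iff.2 hμ))
  have h1 := hN N le_rfl (N+1) (N.le_succ)
  rw [dist_eq_norm] at h1
  have h2 := hpair (φ N) (φ (N+1)) (hφ (N.lt_succ_self))
  linarith

/-- For a compact operator `T` and `μ ≠ 0`, either `μ•1 - T` is invertible or `μ` is an
eigenvalue of `T`. -/
lemma isUnit_or_eig (T : X →L[ℂ] X) (hT : IsCompactOperator T) (μ : ℂ) (hμ : μ ≠ 0) :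
    IsUnit (μ • (1 : X →L[ℂ] X) - T) ∨ ∃ f : X, f ≠ 0 ∧ T f = μ • f := by
  by_cases hinj : Function.Injective ⇑(μ • (1 : X →L[ℂ] X) - T)
  · left
    have hsurj := fredholm T hT μ hμ hinj
    set S : X →L[ℂ] X := μ • (1 : X →L[ℂ] X) - T with hSdef
    have hker : LinearMap.ker (S : X →ₗ[ℂ] X) = ⊥ := LinearMap.ker_eq_bot.2 hinj
    have hrange : LinearMap.range (S : X →ₗ[ℂ] X) = ⊤ := LinearMap.range_eq_top.2 hsurj
    set e := ContinuousLinearEquiv.ofBijective S hker hrange with hedef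
    have hcoe : ∀ x : X, e x = S x := fun x => by
      rw [hedef, ContinuousLinearEquiv.coeFn_ofBijective]
    refine ⟨⟨S, (e.symm : X →L[ℂ] X), ?_, ?_⟩, rfl⟩
    · ext x
      have h1 : S (e.symm x) = e (e.symm x) := (hcoe _).symm
      simp only [ContinuousLinearMap.mul_apply, ContinuousLinearMap.one_apply,
        ContinuousLinearEquiv.coe_coe]
      rw [h1, e.apply_symm_apply]
    · ext x
      have h1 : S x = e x := (hcoe _).symm
      simp only [ContinuousLinearMap.mul_apply, ContinuousLinearMap.one_apply,
        ContinuousLinearEquiv.coe_coe]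
      rw [h1, e.symm_apply_apply]
  · right
    obtain ⟨a, b, hab, hne⟩ := Function.not_injective_iff.1 hinj
    refine ⟨a - b, sub_ne_zero.2 hne, ?_⟩
    have h1 : (μ • (1 : X →L[ℂ] X) - T) (a - b) = 0 := by
      rw [map_sub, hab, sub_self]
    have h2 : μ • (a - b) - T (a - b) = 0 := by
      simpa using h1
    have := sub_eq_zero.1 h2
    exact this.symm

/-- The spectrum of a compact operator does not accumulate at a nonzero point: there is a
punctured closed disk around `lam` consisting of points where `z•1 - T` is invertible. -/
lemma exists_punctured_disk (T : X →L[ℂ] X) (hT : IsCompactOperator T)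
    (lam : ℂ) (hlam : lam ≠ 0) :
    ∃ r : ℝ, 0 < r ∧ ∀ z : ℂ, z ≠ lam → dist z lam ≤ r →
      IsUnit (z • (1 : X →L[ℂ] X) - T) := by
  by_contra hcon
  push_neg at hcon
  have hlampos : (0:ℝ) < ‖lam‖ := norm_pos_iff.2 hlam
  -- the bad points form a subtype
  set Q := {w : ℂ // w ≠ lam ∧ dist w lam ≤ ‖lam‖/2 ∧ ¬IsUnit (w • (1 : X →L[ℂ] X) - T)}
    with hQdef
  have hstep : ∀ q : Q, ∃ z : ℂ, z ≠ lam ∧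
      dist z lam ≤ min (‖lam‖/2) (dist q.1 lam / 2) ∧
      ¬IsUnit (z • (1 : X →L[ℂ] X) - T) := by
    intro q
    exact hcon _ (lt_min (by positivity) (by
      have := dist_pos.2 q.2.1
      positivity))
  obtain ⟨z0, hz0lam, hz0d, hz0u⟩ := hcon (‖lam‖/2) (by positivity)
  let next : Q → Q := fun q => ⟨(hstep q).choose, (hstep q).choose_spec.1,
    le_trans (hstep q).choose_spec.2.1 (min_le_left _ _), (hstep q).choose_spec.2.2⟩
  let zs : ℕ → Q := fun k => next^[k] ⟨z0, hz0lam, hz0d, hz0u⟩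
  set z : ℕ → ℂ := fun k => (zs k).1 with hzdef
  have hzlam : ∀ k, z k ≠ lam := fun k => (zs k).2.1
  have hzdist : ∀ k, dist (z k) lam ≤ ‖lam‖/2 := fun k => (zs k).2.2.1
  have hznu : ∀ k, ¬IsUnit (z k • (1 : X →L[ℂ] X) - T) := fun k => (zs k).2.2.2
  have hhalf : ∀ k, dist (z (k+1)) lam ≤ dist (z k) lam / 2 := by
    intro k
    have hit : zs (k+1) = next (zs k) := Function.iterate_succ_apply' next k _
    have := (hstep (zs k)).choose_spec.2.1
    have h2 : z (k+1) = (hstep (zs k)).choose := by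
      rw [hzdef]
      simp only
      rw [hit]
    rw [h2]
    exact le_trans this (min_le_right _ _)
  have hanti : StrictAnti (fun k => dist (z k) lam) := by
    apply strictAnti_nat_of_succ_lt
    intro k
    have h1 := hhalf k
    have h2 : 0 < dist (z k) lam := dist_pos.2 (hzlam k)
    linarith
  have hzinj : Function.Injective z := by
    intro a b hab
    by_contra hne
    rcases lt_or_gt_of_ne hne with h | h
    · exact absurd (congrArg (fun w => dist w lam) hab) (ne_of_gt (hanti h))
    · exact absurd (congrArg (fun w => dist w lam) hab) (ne_of_lt (hanti h))
  have hzne0 : ∀ k, z k ≠ 0 := by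
    intro k h
    have := hzdist k
    rw [h, dist_eq_norm, zero_sub, norm_neg] at this
    linarith
  have hznorm : ∀ k, ‖lam‖/2 ≤ ‖z k‖ := by
    intro k
    have h1 : ‖lam‖ - ‖z k‖ ≤ ‖lam - z k‖ := norm_sub_norm_le _ _
    have h2 : ‖lam - z k‖ = dist (z k) lam := by rw [dist_eq_norm, norm_sub_rev]
    have := hzdist k
    linarith
  -- eigenvectors
  have hexe : ∀ k : ℕ, ∃ f : X, f ≠ 0 ∧ T f = z k • f := by
    intro k
    rcases isUnit_or_eig T hT (z k) (hzne0 k) with h | h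
    · exact absurd h (hznu k)
    · exact h
  choose e he0 heig using hexe
  -- linear independence
  have hind : LinearIndependent ℂ e := by
    apply Module.End.eigenvectors_linearIndependent' (T : Module.End ℂ X) z hzinj e
    intro k
    refine ⟨?_, he0 k⟩
    rw [Module.End.mem_eigenspace_iff]
    exact heig k
  -- spans
  set E : ℕ → Submodule ℂ X := fun n => Submodule.span ℂ (e '' Iic n) with hEdef
  have hEfin : ∀ n, FiniteDimensional ℂ (E n) := fun n =>
    FiniteDimensional.span_of_finite ℂ ((Set.finite_Iic n).image e)
  have hEclosed : ∀ n, IsClosed ((E n : Submodule ℂ X) : Set X) := fun n =>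
    haveI := hEfin n
    Submodule.closed_of_finiteDimensional (E n)
  have hEmono : ∀ a b : ℕ, a ≤ b → E a ≤ E b := fun a b hab =>
    Submodule.span_mono (Set.image_mono (Iic_subset_Iic.2 (by exact_mod_cast hab)))
  have hEin : ∀ n, e n ∈ E n := fun n =>
    Submodule.subset_span ⟨n, by simp, rfl⟩
  have hEnotin : ∀ n : ℕ, e (n+1) ∉ E n := by
    intro n
    have h1 : (n+1 : ℕ) ∉ Iic n := by simp
    exact hind.notMem_span_image h1
  -- invariance
  have hTE : ∀ n : ℕ, ∀ x ∈ E n, T x ∈ E n := by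
    intro n
    have h1 : Submodule.map (T : X →ₗ[ℂ] X) (E n) ≤ E n := by
      rw [hEdef]
      simp only
      rw [Submodule.map_span_le]
      rintro m ⟨j, hj, rfl⟩
      have : T (e j) = z j • e j := heig j
      exact this ▸ Submodule.smul_mem _ _ (Submodule.subset_span ⟨j, hj, rfl⟩)
    intro x hx
    exact h1 ⟨x, hx, rfl⟩
  have hTzE : ∀ n : ℕ, ∀ x ∈ E (n+1), T x - z (n+1) • x ∈ E n := by
    intro n
    set L : X →L[ℂ] X := T - z (n+1) • (1 : X →L[ℂ] X) with hLdef
    have h1 : Submodule.map (L : X →ₗ[ℂ] X) (E (n+1)) ≤ E n := by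
      rw [hEdef]
      simp only
      rw [Submodule.map_span_le]
      rintro m ⟨j, hj, rfl⟩
      have hLe : L (e j) = (z j - z (n+1)) • e j := by
        rw [hLdef]
        simp only [ContinuousLinearMap.sub_apply, ContinuousLinearMap.smul_apply,
          ContinuousLinearMap.one_apply]
        rw [heig j, sub_smul]
      simp only [ContinuousLinearMap.coe_coe]
      rw [hLe]
      rcases eq_or_lt_of_le (mem_Iic.1 hj) with h | h
      · rw [h, sub_self, zero_smul]
        exact Submodule.zero_mem _
      · exact Submodule.smul_mem _ _ (Submodule.subset_span ⟨j, mem_Iic.2 (by omega), rfl⟩)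
    intro x hx
    have h2 : L x ∈ E n := h1 ⟨x, hx, rfl⟩
    simpa [hLdef] using h2
  -- riesz sequence
  have hexu : ∀ n : ℕ, ∃ u : X, u ∈ E (n+1) ∧ ‖u‖ = 1 ∧ ∀ y ∈ E n, (1:ℝ)/2 ≤ ‖u - y‖ :=
    fun n => riesz_aux (E (n+1)) (E n) (hEmono n (n+1) n.le_succ) (hEclosed n)
      (e (n+1)) (hEin (n+1)) (hEnotin n)
  choose u' hu'1 hu'2 hu'3 using hexu
  set u : ℕ → X := fun n => Nat.casesOn n ((‖e 0‖:ℂ)⁻¹ • e 0) u' with hudef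
  have hu0norm : ‖u 0‖ = 1 := by
    have hnx : (0:ℝ) < ‖e 0‖ := norm_pos_iff.2 (he0 0)
    show ‖(‖e 0‖:ℂ)⁻¹ • e 0‖ = 1
    rw [norm_smul, norm_inv, Complex.norm_real, Real.norm_eq_abs, abs_of_pos hnx,
      inv_mul_cancel₀ hnx.ne']
  have humem : ∀ n, u n ∈ E n := by
    intro n
    cases n with
    | zero => exact Submodule.smul_mem _ _ (hEin 0)
    | succ m => exact hu'1 m
  have hunorm : ∀ n, ‖u n‖ = 1 := by
    intro n
    cases n with
    | zero => exact hu0norm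
    | succ m => exact hu'2 m
  -- the sequence v
  set v : ℕ → X := fun n => (z n)⁻¹ • u n with hvdef
  have hvbound : ∀ n, ‖v n‖ ≤ 2/‖lam‖ := by
    intro n
    show ‖(z n)⁻¹ • u n‖ ≤ 2/‖lam‖
    rw [norm_smul, norm_inv, hunorm n, mul_one,
      inv_le_comm₀ (norm_pos_iff.2 (hzne0 n)) (by positivity), inv_div]
    exact hznorm n
  -- pairwise estimate
  have hpair : ∀ m n : ℕ, n < m → (1:ℝ)/2 ≤ ‖T (v m) - T (v n)‖ := by
    intro m n hnm
    obtain ⟨m', rfl⟩ : ∃ m', m = m' + 1 := ⟨m - 1, by omega⟩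
    have hTvm : T (v (m'+1)) = u (m'+1) + (z (m'+1))⁻¹ • (T (u (m'+1)) - z (m'+1) • u (m'+1)) := by
      show T ((z (m'+1))⁻¹ • u (m'+1)) = _
      rw [map_smul, smul_sub, smul_smul, inv_mul_cancel₀ (hzne0 (m'+1)), one_smul]
      abel
    set y : X := T (v n) - (z (m'+1))⁻¹ • (T (u (m'+1)) - z (m'+1) • u (m'+1)) with hydef
    have hymem : y ∈ E m' := by
      refine Submodule.sub_mem _ ?_ ?_
      · have h1 : T (v n) ∈ E n := by
          apply hTE n
          exact Submodule.smul_mem _ _ (humem n)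
        exact hEmono n m' (by omega) h1
      · exact Submodule.smul_mem _ _ (hTzE m' (u (m'+1)) (humem (m'+1)))
    have heq : T (v (m'+1)) - T (v n) = u (m'+1) - y := by
      rw [hTvm, hydef]
      abel
    rw [heq]
    exact hu'3 m' y hymem
  -- contradiction with compactness
  obtain ⟨φ, hφ, yy, hyy⟩ := subseq_conv T hT (2/‖lam‖) v hvbound
  have hc := hyy.cauchySeq
  obtain ⟨N, hN⟩ := Metric.cauchySeq_iff.1 hc ((1:ℝ)/2) (by norm_num)
  have h1 := hN (N+1) (N.le_succ) N le_rfl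
  rw [dist_eq_norm] at h1
  have h2 := hpair (φ (N+1)) (φ N) (hφ (N.lt_succ_self))
  linarith

/-- Key lemma: if `T` is a compact operator close enough (in terms of a resolvent bound `M`
 of `K` on the circle of radius `r` around `lam`) to `K`, and `lam` is a unit-norm eigenvalue
 of `K`, then `T` has an eigenvalue in the closed disk of radius `r` around `lam`. -/
lemma eigen_in_ball [Nontrivial X] (K T : X →L[ℂ] X) (hTc : IsCompactOperator T)
    (lam : ℂ) (f₀ : X) (hf₀ : ‖f₀‖ = 1) (hf₀eig : K f₀ = lam • f₀)
    (r M : ℝ) (hr : 0 < r) (hrlam : r < ‖lam‖)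
    (hres : ∀ z : ℂ, dist z lam = r → IsUnit (z • (1 : X →L[ℂ] X) - K))
    (hM : ∀ z : ℂ, dist z lam = r → ‖Ring.inverse (z • (1 : X →L[ℂ] X) - K)‖ ≤ M)
    (hsmall : 2 * M * ‖T - K‖ < 1) :
    ∃ (μ : ℂ) (g : X), g ≠ 0 ∧ T g = μ • g ∧ dist μ lam ≤ r := by
  by_contra hcon
  push_neg at hcon
  -- M is nonnegative
  have hsphere : dist (lam + r) lam = r := by
    simp [dist_eq_norm]
    exact hr.le
  have hM0 : 0 ≤ M := le_trans (norm_nonneg _) (hM _ hsphere)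
  have hsmall2 : M * ‖T - K‖ < 1/2 := by nlinarith [norm_nonneg (T - K), hM0]
  -- every point of the closed ball is in the resolvent set of T
  have hball : ∀ z : ℂ, dist z lam ≤ r → IsUnit (z • (1 : X →L[ℂ] X) - T) := by
    intro z hz
    have hz0 : z ≠ 0 := by
      rintro rfl
      rw [dist_eq_norm, zero_sub, norm_neg] at hz
      linarith
    rcases isUnit_or_eig T hTc z hz0 with h | ⟨g, hg0, hgeig⟩
    · exact h
    · exact absurd hz (not_le.2 (hcon z g hg0 hgeig))
  -- uniform resolvent bound for T on the sphere
  have hTbound : ∀ z : ℂ, dist z lam = r →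
      ‖Ring.inverse (z • (1 : X →L[ℂ] X) - T)‖ ≤ 2 * M := by
    intro z hz
    set u : (X →L[ℂ] X)ˣ := (hres z hz).unit with hudef
    set w : X →L[ℂ] X := Ring.inverse (z • (1 : X →L[ℂ] X) - K) * (T - K) with hwdef
    have hw : ‖w‖ ≤ M * ‖T - K‖ :=
      le_trans (norm_mul_le _ _) (mul_le_mul_of_nonneg_right (hM z hz) (norm_nonneg _))
    have hw1 : ‖w‖ < 1 := lt_trans (lt_of_le_of_lt hw hsmall2) one_half_lt_one
    set u2 : (X →L[ℂ] X)ˣ := Units.oneSub w hw1 with hu2def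
    have hu2val : (u2 : X →L[ℂ] X) = 1 - w := rfl
    have hfact : z • (1 : X →L[ℂ] X) - T = (u : X →L[ℂ] X) * (u2 : X →L[ℂ] X) := by
      rw [hu2val, IsUnit.unit_spec, mul_sub, mul_one, hwdef, ← mul_assoc,
        Ring.mul_inverse_cancel _ (hres z hz), one_mul]
      abel
    have hinv2 : ‖((u2⁻¹ : (X →L[ℂ] X)ˣ) : X →L[ℂ] X)‖ ≤ 2 := by
      set vinv : X →L[ℂ] X := ((u2⁻¹ : (X →L[ℂ] X)ˣ) : X →L[ℂ] X) with hvdef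
      have hid : vinv = 1 + w * vinv := by
        have h1 : (1 - w) * vinv = 1 := by
          rw [← hu2val, Units.mul_inv]
        have h2 : vinv - w * vinv = 1 := by
          rw [← h1, sub_mul, one_mul]
        exact sub_eq_iff_eq_add.1 h2
      have hb : ‖vinv‖ ≤ 1 + (1/2) * ‖vinv‖ := by
        calc ‖vinv‖ = ‖1 + w * vinv‖ := by rw [← hid]
          _ ≤ ‖(1 : X →L[ℂ] X)‖ + ‖w * vinv‖ := norm_add_le _ _
          _ ≤ 1 + ‖w‖ * ‖vinv‖ := by
              rw [norm_one]
              exact add_le_add_right (norm_mul_le _ _) 1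
          _ ≤ 1 + (1/2) * ‖vinv‖ := by
              have h3 : ‖w‖ ≤ 1/2 := le_of_lt (lt_of_le_of_lt hw hsmall2)
              have := mul_le_mul_of_nonneg_right h3 (norm_nonneg vinv)
              linarith
      linarith
    have hinvu : ‖((u⁻¹ : (X →L[ℂ] X)ˣ) : X →L[ℂ] X)‖ ≤ M := by
      have h1 : ((u⁻¹ : (X →L[ℂ] X)ˣ) : X →L[ℂ] X)
          = Ring.inverse (z • (1 : X →L[ℂ] X) - K) := by
        rw [← (hres z hz).unit_spec, Ring.inverse_unit]
      rw [h1]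
      exact hM z hz
    have hunit : IsUnit (z • (1 : X →L[ℂ] X) - T) := hball z hz.le
    have hinveq : Ring.inverse (z • (1 : X →L[ℂ] X) - T)
        = ((u2⁻¹ : (X →L[ℂ] X)ˣ) : X →L[ℂ] X) * ((u⁻¹ : (X →L[ℂ] X)ˣ) : X →L[ℂ] X) := by
      rw [hfact, ← Units.val_mul, Ring.inverse_unit, mul_inv_rev, Units.val_mul]
    rw [hinveq]
    calc ‖((u2⁻¹ : (X →L[ℂ] X)ˣ) : X →L[ℂ] X) * ((u⁻¹ : (X →L[ℂ] X)ˣ) : X →L[ℂ] X)‖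
        ≤ ‖((u2⁻¹ : (X →L[ℂ] X)ˣ) : X →L[ℂ] X)‖ * ‖((u⁻¹ : (X →L[ℂ] X)ˣ) : X →L[ℂ] X)‖ :=
          norm_mul_le _ _
      _ ≤ 2 * M := mul_le_mul hinv2 hinvu (norm_nonneg _) (by norm_num)
  -- the closed ball is in the resolvent set of T
  have hresball : ∀ z ∈ closedBall lam r, z ∈ resolventSet ℂ (T : X →L[ℂ] X) := by
    intro z hz
    rw [spectrum.mem_resolventSet_iff, Algebra.algebraMap_eq_smul_one]
    exact hball z (mem_closedBall.1 hz)
  -- the vector-valued resolvent applied to w₀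
  set w₀ : X := (K - T) f₀ with hw₀def
  set g : ℂ → X := fun z => (resolvent (T : X →L[ℂ] X) z) w₀ with hgdef
  have hdiff : ∀ z ∈ closedBall lam r, DifferentiableAt ℂ g z := by
    intro z hz
    have h1 := (spectrum.hasDerivAt_resolvent (hresball z hz)).differentiableAt
    exact h1.clm_apply (differentiableAt_const w₀)
  have hdcl : DiffContOnCl ℂ g (ball lam r) := by
    refine ⟨fun z hz => (hdiff z (ball_subset_closedBall hz)).differentiableWithinAt, ?_⟩
    intro z hz
    rw [closure_ball lam hr.ne'] at hz
    exact (hdiff z hz).continuousAt.continuousWithinAt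
  have hcauchy := hdcl.circleIntegral_sub_inv_smul (mem_ball_self hr)
  -- norm bound on the circle
  have hgb : ∀ z ∈ sphere lam r, ‖(z - lam)⁻¹ • g z‖ ≤ r⁻¹ * (2*M*‖w₀‖) := by
    intro z hz
    rw [mem_sphere] at hz
    have hrz : resolvent (T : X →L[ℂ] X) z = Ring.inverse (z • (1 : X →L[ℂ] X) - T) := by
      rw [resolvent, Algebra.algebraMap_eq_smul_one]
    have h1 : ‖g z‖ ≤ 2*M*‖w₀‖ := by
      calc ‖g z‖ ≤ ‖resolvent (T : X →L[ℂ] X) z‖ * ‖w₀‖ :=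
            (resolvent (T : X →L[ℂ] X) z).le_opNorm w₀
        _ ≤ (2*M) * ‖w₀‖ := by
            rw [hrz]
            exact mul_le_mul_of_nonneg_right (hTbound z hz) (norm_nonneg _)
        _ = 2*M*‖w₀‖ := by ring
    rw [norm_smul, norm_inv]
    have hzl : ‖z - lam‖ = r := by rw [← dist_eq_norm]; exact hz
    rw [hzl]
    exact mul_le_mul_of_nonneg_left h1 (inv_nonneg.2 hr.le)
  have hint := circleIntegral.norm_integral_le_of_norm_le_const hr.le hgb
  rw [hcauchy] at hint
  have hnorm2pi : ‖(2 * Real.pi * Complex.I : ℂ)‖ = 2 * Real.pi := by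
    simp [Complex.norm_I, abs_of_nonneg Real.pi_nonneg]
  have hglam : ‖g lam‖ ≤ 2*M*‖w₀‖ := by
    rw [norm_smul, hnorm2pi] at hint
    have heq2 : 2 * Real.pi * r * (r⁻¹ * (2*M*‖w₀‖)) = 2 * Real.pi * (2*M*‖w₀‖) := by
      field_simp
    rw [heq2] at hint
    nlinarith [Real.pi_pos]
  -- g lam = f₀
  have hBf₀ : (lam • (1 : X →L[ℂ] X) - T) f₀ = w₀ := by
    have h1 : (lam • (1 : X →L[ℂ] X) - T) f₀ = lam • f₀ - T f₀ := by simp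
    rw [h1, ← hf₀eig, hw₀def]
    simp
  have hglamf : g lam = f₀ := by
    have hB : IsUnit (lam • (1 : X →L[ℂ] X) - T) :=
      hball lam (by simp [hr.le])
    have h1 : g lam = Ring.inverse (lam • (1 : X →L[ℂ] X) - T) w₀ := by
      rw [hgdef]
      simp only
      rw [resolvent, Algebra.algebraMap_eq_smul_one]
    rw [h1, ← hBf₀, ← ContinuousLinearMap.mul_apply,
      Ring.inverse_mul_cancel _ hB, ContinuousLinearMap.one_apply]
  have hw₀b : ‖w₀‖ ≤ ‖T - K‖ := by
    calc ‖w₀‖ ≤ ‖K - T‖ * ‖f₀‖ := (K - T).le_opNorm f₀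
      _ = ‖T - K‖ := by rw [hf₀, mul_one, norm_sub_rev]
  rw [hglamf, hf₀] at hglam
  nlinarith [norm_nonneg w₀, hM0]

end Statement7Aux

open Statement7Aux

/-- Approximation of eigenvalues of compact operators, Lemma A.
Let `X` be a complex Banach space and `(Kₙ)` a sequence of compact operators on `X`
converging in operator norm to `K`.  Then for every eigenvalue `λ ≠ 0` of `K` there exist
a subsequence `K_{n_j}`, eigenvalues `λ_{n_j}` of `K_{n_j}` with unit eigenvectors
`f_{n_j}`, such that `λ_{n_j} → λ` and `f_{n_j}` converges to a unit vector `f` with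
`K f = λ f`. -/
theorem statement7 (X : Type*) [NormedAddCommGroup X] [NormedSpace ℂ X] [CompleteSpace X]
    (K : X →L[ℂ] X) (Kn : ℕ → X →L[ℂ] X)
    (hcomp : ∀ n : ℕ, IsCompactOperator (Kn n))
    (hconv : Tendsto (fun n : ℕ => ‖Kn n - K‖) atTop (nhds 0))
    (lam : ℂ) (hlam : lam ≠ 0)
    (heig : ∃ f₀ : X, f₀ ≠ 0 ∧ K f₀ = lam • f₀) :
    ∃ nj : ℕ → ℕ, StrictMono nj ∧
      ∃ (lams : ℕ → ℂ) (fj : ℕ → X) (f : X),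
        (∀ j : ℕ, ‖fj j‖ = 1) ∧
        (∀ j : ℕ, Kn (nj j) (fj j) = lams j • fj j) ∧
        Tendsto lams atTop (nhds lam) ∧
        Tendsto fj atTop (nhds f) ∧
        K f = lam • f ∧ ‖f‖ = 1 := by
  classical
  obtain ⟨f₀', hf₀'ne, hf₀'eig⟩ := heig
  haveI : Nontrivial X := ⟨⟨f₀', 0, hf₀'ne⟩⟩
  have hlampos : (0:ℝ) < ‖lam‖ := norm_pos_iff.2 hlam
  -- normalized eigenvector of K
  have hnf' : (0:ℝ) < ‖f₀'‖ := norm_pos_iff.2 hf₀'ne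
  set f₀ : X := (‖f₀'‖:ℂ)⁻¹ • f₀' with hf₀def
  have hf₀ : ‖f₀‖ = 1 := by
    rw [hf₀def, norm_smul, norm_inv, Complex.norm_real, Real.norm_eq_abs, abs_of_pos hnf',
      inv_mul_cancel₀ hnf'.ne']
  have hf₀eig : K f₀ = lam • f₀ := by
    rw [hf₀def, map_smul, hf₀'eig, smul_comm]
  -- K is compact
  have hKconv : Tendsto Kn atTop (𝓝 K) := tendsto_iff_norm_sub_tendsto_zero.2 hconv
  have hKc : IsCompactOperator K :=
    isCompactOperator_of_tendsto hKconv (Eventually.of_forall hcomp)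
  -- isolation radius
  obtain ⟨r₀, hr₀pos, hr₀⟩ := exists_punctured_disk K hKc lam hlam
  set r1 : ℝ := min r₀ (‖lam‖/2) with hr1def
  have hr1pos : 0 < r1 := lt_min hr₀pos (by positivity)
  have hr1lam : r1 < ‖lam‖ := lt_of_le_of_lt (min_le_right _ _) (by linarith)
  set rj : ℕ → ℝ := fun j => r1 / (j+1) with hrjdef
  have hrjpos : ∀ j : ℕ, 0 < rj j := fun j => by positivity
  have hrjle : ∀ j : ℕ, rj j ≤ r1 := by
    intro j
    rw [hrjdef]
    simp only
    rw [div_le_iff₀ (by positivity)]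
    nlinarith [hr1pos, (Nat.cast_nonneg j : (0:ℝ) ≤ j)]
  have hrjlam : ∀ j : ℕ, rj j < ‖lam‖ := fun j => lt_of_le_of_lt (hrjle j) hr1lam
  have hrjres : ∀ (j : ℕ) (z : ℂ), dist z lam = rj j →
      IsUnit (z • (1 : X →L[ℂ] X) - K) := by
    intro j z hz
    refine hr₀ z ?_ ?_
    · intro h
      rw [h, dist_self] at hz
      exact (hrjpos j).ne' hz.symm
    · rw [hz]
      exact le_trans (hrjle j) (min_le_left _ _)
  -- resolvent bound on each sphere
  have hMj : ∀ j : ℕ, ∃ M : ℝ, ∀ z : ℂ, dist z lam = rj j →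
      ‖Ring.inverse (z • (1 : X →L[ℂ] X) - K)‖ ≤ M := by
    intro j
    have hcont : ContinuousOn (fun z : ℂ => resolvent (K : X →L[ℂ] X) z)
        (sphere lam (rj j)) := by
      intro z hz
      rw [mem_sphere] at hz
      have hzres : z ∈ resolventSet ℂ (K : X →L[ℂ] X) := by
        rw [spectrum.mem_resolventSet_iff, Algebra.algebraMap_eq_smul_one]
        exact hrjres j z hz
      exact ((spectrum.hasDerivAt_resolvent hzres).differentiableAt).continuousAt.continuousWithinAt
    obtain ⟨M, hM⟩ := (isCompact_sphere lam (rj j)).exists_bound_of_continuousOn hcont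
    refine ⟨M, fun z hz => ?_⟩
    have := hM z (by rwa [mem_sphere])
    rwa [resolvent, Algebra.algebraMap_eq_smul_one] at this
  choose M hM using hMj
  have hM0 : ∀ j, 0 ≤ M j := by
    intro j
    have hsp : dist (lam + rj j) lam = rj j := by
      simp [dist_eq_norm]
      exact (hrjpos j).le
    exact le_trans (norm_nonneg _) (hM j _ hsp)
  -- thresholds
  have hev : ∀ j : ℕ, ∃ N : ℕ, ∀ n ≥ N, 2 * M j * ‖Kn n - K‖ < 1 := by
    intro j
    have h1 : ∀ᶠ n in atTop, ‖Kn n - K‖ < (2 * M j + 1)⁻¹ :=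
      hconv.eventually (gt_mem_nhds (by have := hM0 j; positivity : (0:ℝ) < (2 * M j + 1)⁻¹))
    obtain ⟨N, hN⟩ := eventually_atTop.1 h1
    refine ⟨N, fun n hn => ?_⟩
    have h2 := hN n hn
    have hMnn := hM0 j
    calc 2 * M j * ‖Kn n - K‖ ≤ 2 * M j * (2 * M j + 1)⁻¹ := by
          apply mul_le_mul_of_nonneg_left h2.le (by positivity)
      _ < 1 := by
          rw [← div_eq_mul_inv, div_lt_one (by positivity)]
          linarith
  choose N hN using hev
  -- strictly monotone indices
  set nidx : ℕ → ℕ := fun j => Nat.rec (N 0) (fun j prev => max (N (j+1)) (prev+1)) j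
    with hnidxdef
  have hnmono : StrictMono nidx := by
    apply strictMono_nat_of_lt_succ
    intro j
    exact lt_of_lt_of_le (Nat.lt_succ_self _) (le_max_right _ _)
  have hnge : ∀ j, N j ≤ nidx j := by
    intro j
    cases j with
    | zero => exact le_rfl
    | succ m => exact le_max_left _ _
  -- eigenpairs
  have hex : ∀ j : ℕ, ∃ (μ : ℂ) (g : X), g ≠ 0 ∧ Kn (nidx j) g = μ • g ∧
      dist μ lam ≤ rj j := by
    intro j
    exact eigen_in_ball K (Kn (nidx j)) (hcomp _) lam f₀ hf₀ hf₀eig (rj j) (M j)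
      (hrjpos j) (hrjlam j) (hrjres j) (hM j) (hN j _ (hnge j))
  choose μ gv hg0 hgeig hgdist using hex
  -- normalized eigenvectors
  set fv : ℕ → X := fun j => (‖gv j‖:ℂ)⁻¹ • gv j with hfvdef
  have hfnorm : ∀ j, ‖fv j‖ = 1 := by
    intro j
    have hng : (0:ℝ) < ‖gv j‖ := norm_pos_iff.2 (hg0 j)
    rw [hfvdef]
    simp only
    rw [norm_smul, norm_inv, Complex.norm_real, Real.norm_eq_abs, abs_of_pos hng,
      inv_mul_cancel₀ hng.ne']
  have hfeig : ∀ j, Kn (nidx j) (fv j) = μ j • fv j := by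
    intro j
    rw [hfvdef]
    simp only
    rw [map_smul, hgeig j, smul_comm]
  -- eigenvalues converge
  have hrj0 : Tendsto rj atTop (𝓝 0) := by
    have h1 : Tendsto (fun n : ℕ => r1 * (1/(n+1) : ℝ)) atTop (𝓝 (r1 * 0)) :=
      tendsto_one_div_add_atTop_nhds_zero_nat.const_mul r1
    rw [mul_zero] at h1
    refine h1.congr (fun n => ?_)
    rw [hrjdef]
    simp only
    rw [mul_one_div]
  have hμlam : Tendsto μ atTop (𝓝 lam) := by
    rw [tendsto_iff_dist_tendsto_zero]
    exact squeeze_zero (fun j => dist_nonneg) hgdist hrj0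
  have hμne : ∀ j, μ j ≠ 0 := by
    intro j h
    have h1 := hgdist j
    rw [h, dist_eq_norm, zero_sub, norm_neg] at h1
    linarith [hrjlam j]
  -- further subsequence so that eigenvectors converge
  obtain ⟨φ, hφ, y, hy⟩ := subseq_conv K hKc 1 fv (fun j => (hfnorm j).le)
  have hφidx : Tendsto (fun j => nidx (φ j)) atTop atTop :=
    (hnmono.comp hφ).tendsto_atTop
  have hdiff0 : Tendsto (fun j => Kn (nidx (φ j)) (fv (φ j)) - K (fv (φ j))) atTop (𝓝 0) := by
    refine squeeze_zero_norm (a := fun j => ‖Kn (nidx (φ j)) - K‖) (fun j => ?_) ?_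
    · have h1 : Kn (nidx (φ j)) (fv (φ j)) - K (fv (φ j))
          = (Kn (nidx (φ j)) - K) (fv (φ j)) := by simp
      rw [h1]
      calc ‖(Kn (nidx (φ j)) - K) (fv (φ j))‖
          ≤ ‖Kn (nidx (φ j)) - K‖ * ‖fv (φ j)‖ := (Kn (nidx (φ j)) - K).le_opNorm _
        _ = ‖Kn (nidx (φ j)) - K‖ := by rw [hfnorm, mul_one]
    · exact hconv.comp hφidx
  have hμf : Tendsto (fun j => μ (φ j) • fv (φ j)) atTop (𝓝 y) := by
    have h1 : Tendsto (fun j => (Kn (nidx (φ j)) (fv (φ j)) - K (fv (φ j))) + K (fv (φ j)))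
        atTop (𝓝 (0 + y)) := hdiff0.add hy
    rw [zero_add] at h1
    refine h1.congr (fun j => ?_)
    rw [sub_add_cancel, hfeig]
  have hμφ : Tendsto (fun j => μ (φ j)) atTop (𝓝 lam) := hμlam.comp hφ.tendsto_atTop
  have hμinv : Tendsto (fun j => (μ (φ j))⁻¹) atTop (𝓝 lam⁻¹) := hμφ.inv₀ hlam
  set f : X := lam⁻¹ • y with hfdef
  have hfconv : Tendsto (fun j => fv (φ j)) atTop (𝓝 f) := by
    have h2 := hμinv.smul hμf
    refine h2.congr (fun j => ?_)
    rw [smul_smul, inv_mul_cancel₀ (hμne _), one_smul]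
  have hfde : ‖f‖ = 1 := by
    have h1 : Tendsto (fun j => ‖fv (φ j)‖) atTop (𝓝 ‖f‖) := hfconv.norm
    have h2 : Tendsto (fun j => ‖fv (φ j)‖) atTop (𝓝 1) := by
      simpa [hfnorm] using (tendsto_const_nhds : Tendsto (fun _ : ℕ => (1:ℝ)) atTop (𝓝 1))
    exact tendsto_nhds_unique h1 h2
  have hKfy : K f = y := by
    have h1 : Tendsto (fun j => K (fv (φ j))) atTop (𝓝 (K f)) :=
      (K.continuous.tendsto f).comp hfconv
    exact tendsto_nhds_unique h1 hy
  have hKf : K f = lam • f := by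
    rw [hKfy, hfdef, smul_smul, mul_inv_cancel₀ hlam, one_smul]
  exact ⟨fun j => nidx (φ j), hnmono.comp hφ, fun j => μ (φ j), fun j => fv (φ j), f,
    fun j => hfnorm _, fun j => hfeig _, hμφ, hfconv, hKf, hfde⟩
end

section
/- Let ℬ be a Banach space, a > 0, and let F ∈ C²((0,a); ℬ) satisfy F(0) = F(a) = 0 (in the sense of limits at the endpoints), ‖F'(ω)‖_ℬ ≤ C₀ ω^{-1/2} and ‖F''(ω)‖_ℬ ≤ C₀ ω^{-3/2} for all ω ∈ (0,a). Then there exists C > 0 (depending only on C₀ and a) such that for every t > 1, ‖ ∫₀^a e^{itω} F(ω) dω ‖_ℬ ≤ C t^{-3/2}. -/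
open Filter Topology intervalIntegral

open MeasureTheory Set



lemma norm_exp_It (t ω : ℝ) : ‖Complex.exp (Complex.I * t * ω)‖ = 1 := by
  rw [Complex.norm_exp]
  norm_num [Complex.mul_re, Complex.mul_im]

lemma hasDerivAt_exp_It (t ω : ℝ) :
    HasDerivAt (fun ω : ℝ => Complex.exp (Complex.I * t * ω))
      (Complex.I * t * Complex.exp (Complex.I * t * ω)) ω := by
  have h1 : HasDerivAt (fun z : ℂ => Complex.exp (Complex.I * t * z))
      (Complex.I * t * Complex.exp (Complex.I * t * ω)) (ω : ℂ) := by
    have := (Complex.hasDerivAt_exp (Complex.I * t * ω)).comp (ω : ℂ)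
        ((hasDerivAt_id (ω : ℂ)).const_mul (Complex.I * t))
    simpa [Function.comp_def, mul_comm] using this
  exact h1.comp_ofReal

lemma ibp_smul {B : Type*} [NormedAddCommGroup B] [NormedSpace ℂ B] [CompleteSpace B]
    {u u' : ℝ → ℂ} {v v' : ℝ → B} {x y : ℝ}
    (hu : ∀ ω ∈ Set.uIcc x y, HasDerivAt u (u' ω) ω)
    (hv : ∀ ω ∈ Set.uIcc x y, HasDerivAt v (v' ω) ω)
    (hu' : ContinuousOn u' (Set.uIcc x y))
    (hv' : ContinuousOn v' (Set.uIcc x y)) :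
    ∫ ω in x..y, u' ω • v ω
      = u y • v y - u x • v x - ∫ ω in x..y, u ω • v' ω := by
  have hcu : ContinuousOn u (Set.uIcc x y) := fun ω hω => ((hu ω hω).continuousAt).continuousWithinAt
  have hcv : ContinuousOn v (Set.uIcc x y) := fun ω hω => ((hv ω hω).continuousAt).continuousWithinAt
  have h1 : IntervalIntegrable (fun ω => u' ω • v ω) volume x y :=
    (hu'.smul hcv).intervalIntegrable
  have h2 : IntervalIntegrable (fun ω => u ω • v' ω) volume x y :=
    (hcu.smul hv').intervalIntegrable
  have key := integral_eq_sub_of_hasDerivAt (f := fun ω => u ω • v ω)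
    (f' := fun ω => u' ω • v ω + u ω • v' ω)
    (fun ω hω => by have := (hu ω hω).smul (hv ω hω); rw [add_comm] at this; exact this) (h1.add h2)
  rw [intervalIntegral.integral_add h1 h2] at key
  rw [eq_sub_iff_add_eq, ← key]

section seq

variable {p q : ℝ}

lemma seq_lt (hpq : p < q) (n : ℕ) :
    p < p + (q - p) / (n + 2) ∧ p + (q - p) / (n + 2) ≤ q - (q - p) / (n + 2) ∧
      q - (q - p) / (n + 2) < q := by
  have hd : (0:ℝ) < q - p := by linarith
  have hn : (0:ℝ) < (n:ℝ) + 2 := by positivity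
  have h1 : (0:ℝ) < (q - p) / (n + 2) := by positivity
  have h2 : (q - p) / (n + 2) ≤ (q - p) / 2 := by
    have hc : (0:ℝ) ≤ (n:ℝ) := Nat.cast_nonneg n
    gcongr <;> linarith
  refine ⟨by linarith, by linarith, by linarith⟩

lemma seq_tendsto (hpq : p < q) :
    Tendsto (fun n : ℕ => (q - p) / (n + 2)) atTop (𝓝 0) := by
  have h : Tendsto (fun n : ℕ => ((n : ℝ) + 2)) atTop atTop :=
    tendsto_atTop_add_const_right atTop 2 tendsto_natCast_atTop_atTop
  have h2 : Tendsto (fun n : ℕ => ((n:ℝ) + 2)⁻¹) atTop (𝓝 0) := h.inv_tendsto_atTop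
  have h3 := h2.const_mul (q - p)
  simpa [div_eq_mul_inv] using h3

lemma tendsto_ii {B : Type*} [NormedAddCommGroup B] [NormedSpace ℝ B]
    (f : ℝ → B) (hpq : p < q)
    (hfi : MeasureTheory.IntegrableOn f (Set.Ioo p q) MeasureTheory.volume) :
    Tendsto (fun n : ℕ => ∫ ω in (p + (q - p) / (n + 2))..(q - (q - p) / (n + 2)), f ω)
      atTop (𝓝 (∫ ω in Set.Ioo p q, f ω)) := by
  set l : ℕ → ℝ := fun n => p + (q - p) / (n + 2) with hl
  set u : ℕ → ℝ := fun n => q - (q - p) / (n + 2) with hu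
  have hunion : (⋃ n : ℕ, Set.Ioo (l n) (u n)) = Set.Ioo p q := by
    apply Set.Subset.antisymm
    · exact Set.iUnion_subset fun n => Set.Ioo_subset_Ioo (seq_lt hpq n).1.le (seq_lt hpq n).2.2.le
    · intro x hx
      obtain ⟨hx1, hx2⟩ := hx
      have hm : (0:ℝ) < min (x - p) (q - x) := lt_min (by linarith) (by linarith)
      obtain ⟨n, hn⟩ := exists_nat_gt ((q - p) / min (x - p) (q - x))
      refine Set.mem_iUnion.2 ⟨n, ?_, ?_⟩
      · have : (q - p) / ((n:ℝ) + 2) < min (x - p) (q - x) := by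
          rw [div_lt_iff₀ (by positivity)]
          have h2 : (q - p) / min (x - p) (q - x) < (n:ℝ) + 2 := by
            have : (0:ℝ) ≤ n := Nat.cast_nonneg n
            linarith
          calc q - p = (q - p) / min (x - p) (q - x) * min (x - p) (q - x) := by
                field_simp
            _ < ((n:ℝ) + 2) * min (x - p) (q - x) := by
                apply mul_lt_mul_of_pos_right h2 hm
            _ = min (x - p) (q - x) * ((n:ℝ) + 2) := by ring
        have := lt_of_lt_of_le this (min_le_left _ _)
        simp only [l]
        linarith
      · have : (q - p) / ((n:ℝ) + 2) < min (x - p) (q - x) := by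
          rw [div_lt_iff₀ (by positivity)]
          have h2 : (q - p) / min (x - p) (q - x) < (n:ℝ) + 2 := by
            have : (0:ℝ) ≤ n := Nat.cast_nonneg n
            linarith
          calc q - p = (q - p) / min (x - p) (q - x) * min (x - p) (q - x) := by
                field_simp
            _ < ((n:ℝ) + 2) * min (x - p) (q - x) := by
                apply mul_lt_mul_of_pos_right h2 hm
            _ = min (x - p) (q - x) * ((n:ℝ) + 2) := by ring
        have := lt_of_lt_of_le this (min_le_right _ _)
        simp only [u]
        linarith
  have hmono : Monotone fun n : ℕ => Set.Ioo (l n) (u n) := by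
    intro m n hmn
    have hc : ((m:ℝ) + 2) ≤ ((n:ℝ) + 2) := by
      have := (Nat.cast_le (α := ℝ)).2 hmn; linarith
    have hc0 : (0:ℝ) < (m:ℝ) + 2 := by positivity
    have hdiv : (q - p) / ((n:ℝ) + 2) ≤ (q - p) / ((m:ℝ) + 2) := by
      gcongr <;> linarith
    exact Set.Ioo_subset_Ioo (by simp only [l]; linarith) (by simp only [u]; linarith)
  have key := MeasureTheory.tendsto_setIntegral_of_monotone
    (fun n : ℕ => measurableSet_Ioo) hmono (hunion ▸ hfi)
  rw [hunion] at key
  refine key.congr fun n => ?_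
  rw [intervalIntegral.integral_of_le (seq_lt hpq n).2.1, MeasureTheory.integral_Ioc_eq_integral_Ioo]

end seq

lemma norm_uu_smul {B : Type*} [NormedAddCommGroup B] [NormedSpace ℂ B]
    {t : ℝ} (ht0 : 0 < t) (ω : ℝ) (x : B) :
    ‖((Complex.I * t)⁻¹ * Complex.exp (Complex.I * t * ω)) • x‖ = t⁻¹ * ‖x‖ := by
  rw [norm_smul, norm_mul, norm_inv, norm_mul, Complex.norm_I, one_mul, norm_exp_It, mul_one,
    Complex.norm_real, Real.norm_eq_abs, abs_of_pos ht0]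

lemma ibp_limit {B : Type*} [NormedAddCommGroup B] [NormedSpace ℂ B] [CompleteSpace B]
    {t : ℝ} (ht0 : t ≠ 0) {p q : ℝ} (hpq : p < q) {G G' : ℝ → B}
    (hd : ∀ ω ∈ Set.Ioo p q, HasDerivAt G (G' ω) ω)
    (hG'c : ContinuousOn G' (Set.Ioo p q))
    (hGint : MeasureTheory.IntegrableOn
      (fun ω : ℝ => Complex.exp (Complex.I * t * ω) • G ω) (Set.Ioo p q) volume)
    (hG'int : MeasureTheory.IntegrableOn
      (fun ω : ℝ => Complex.exp (Complex.I * t * ω) • G' ω) (Set.Ioo p q) volume) :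
    Tendsto (fun n : ℕ =>
      ((Complex.I * t)⁻¹ * Complex.exp (Complex.I * t * ((q - (q - p)/(n + 2) : ℝ) : ℂ))) •
          G (q - (q - p)/(n + 2))
        - ((Complex.I * t)⁻¹ * Complex.exp (Complex.I * t * ((p + (q - p)/(n + 2) : ℝ) : ℂ))) •
          G (p + (q - p)/(n + 2)))
      atTop
      (𝓝 ((∫ ω in Set.Ioo p q, Complex.exp (Complex.I * t * ω) • G ω)
          + (Complex.I * t)⁻¹ • ∫ ω in Set.Ioo p q, Complex.exp (Complex.I * t * ω) • G' ω)) := by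
  set c : ℂ := (Complex.I * t)⁻¹ with hc
  have hec : Continuous fun ω : ℝ => Complex.exp (Complex.I * t * ω) :=
    Complex.continuous_exp.comp (continuous_const.mul Complex.continuous_ofReal)
  have hsub : ∀ n : ℕ, Set.uIcc (p + (q - p)/(n + 2)) (q - (q - p)/(n + 2)) ⊆ Set.Ioo p q := by
    intro n
    obtain ⟨h1, h2, h3⟩ := seq_lt hpq n
    rw [Set.uIcc_of_le h2]
    exact fun x hx => ⟨lt_of_lt_of_le h1 hx.1, lt_of_le_of_lt hx.2 h3⟩
  have hibp : ∀ n : ℕ,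
      ((Complex.I * t)⁻¹ * Complex.exp (Complex.I * t * ((q - (q - p)/(n + 2) : ℝ) : ℂ))) •
          G (q - (q - p)/(n + 2))
        - ((Complex.I * t)⁻¹ * Complex.exp (Complex.I * t * ((p + (q - p)/(n + 2) : ℝ) : ℂ))) •
          G (p + (q - p)/(n + 2))
      = (∫ ω in (p + (q - p)/(n + 2))..(q - (q - p)/(n + 2)),
            Complex.exp (Complex.I * t * ω) • G ω)
        + c • ∫ ω in (p + (q - p)/(n + 2))..(q - (q - p)/(n + 2)),
            Complex.exp (Complex.I * t * ω) • G' ω := by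
    intro n
    have hu : ∀ ω ∈ Set.uIcc (p + (q - p)/(n + 2)) (q - (q - p)/(n + 2)),
        HasDerivAt (fun ω : ℝ => c * Complex.exp (Complex.I * t * ω))
          (Complex.exp (Complex.I * t * ω)) ω := by
      intro ω _
      have h1 := (hasDerivAt_exp_It t ω).const_mul c
      have h : (Complex.I * (t:ℂ)) ≠ 0 :=
        mul_ne_zero Complex.I_ne_zero (Complex.ofReal_ne_zero.2 ht0)
      have h2 : c * (Complex.I * ↑t * Complex.exp (Complex.I * ↑t * ↑ω))
          = Complex.exp (Complex.I * t * ω) := by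
        rw [hc, ← mul_assoc, inv_mul_cancel₀ h, one_mul]
      rwa [h2] at h1
    have key := ibp_smul hu (fun ω hω => hd ω (hsub n hω)) (hec.continuousOn)
      (hG'c.mono (hsub n))
    rw [key]
    have h3 : (∫ ω in (p + (q - p)/(n + 2))..(q - (q - p)/(n + 2)),
        (c * Complex.exp (Complex.I * t * ω)) • G' ω)
        = c • ∫ ω in (p + (q - p)/(n + 2))..(q - (q - p)/(n + 2)),
            Complex.exp (Complex.I * t * ω) • G' ω := by
      rw [← intervalIntegral.integral_smul]
      exact intervalIntegral.integral_congr fun ω _ => (smul_smul c _ _).symm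
    rw [h3, sub_add_cancel]
  have hT1 := tendsto_ii (fun ω : ℝ => Complex.exp (Complex.I * t * ω) • G ω) hpq hGint
  have hT2 := (tendsto_ii (fun ω : ℝ => Complex.exp (Complex.I * t * ω) • G' ω) hpq
    hG'int).const_smul c
  exact ((hT1.add hT2).congr fun n => (hibp n).symm)

lemma eval_rpow_half (C₀ : ℝ) {p : ℝ} (hp : 0 < p) :
    ∫ ω in Set.Ioo (0:ℝ) p, C₀ * ω ^ (-(1:ℝ)/2) = C₀ * (2 * p ^ ((1:ℝ)/2)) := by
  rw [← MeasureTheory.integral_Ioc_eq_integral_Ioo, ← intervalIntegral.integral_of_le hp.le,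
    intervalIntegral.integral_const_mul, integral_rpow (Or.inl (by norm_num))]
  rw [show -(1:ℝ)/2 + 1 = 1/2 by norm_num, Real.zero_rpow (by norm_num)]
  ring

lemma eval_rpow_threehalf (C₀ : ℝ) {p q : ℝ} (hp : 0 < p) (hpq : p ≤ q) :
    ∫ ω in Set.Ioo p q, C₀ * ω ^ (-(3:ℝ)/2)
      = C₀ * ((p ^ (-(1:ℝ)/2) - q ^ (-(1:ℝ)/2)) * 2) := by
  have h0 : (0:ℝ) ∉ Set.uIcc p q := by
    rw [Set.uIcc_of_le hpq]
    exact fun h => absurd h.1 (not_le.2 hp)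
  rw [← MeasureTheory.integral_Ioc_eq_integral_Ioo, ← intervalIntegral.integral_of_le hpq,
    intervalIntegral.integral_const_mul, integral_rpow (Or.inr ⟨by norm_num, h0⟩)]
  rw [show -(3:ℝ)/2 + 1 = -(1:ℝ)/2 by norm_num]
  ring


/-- Jensen–Kato lemma, Lemma C.
Let `ℬ` be a complex Banach space, `a > 0` and `C₀ > 0`.  There is `C > 0`, depending only
on `C₀` and `a`, such that whenever `F ∈ C²((0,a); ℬ)` satisfies `F(0) = F(a) = 0` (as
limits at the endpoints), `‖F'(ω)‖ ≤ C₀ ω^{-1/2}` and `‖F''(ω)‖ ≤ C₀ ω^{-3/2}` on `(0,a)`,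
then `‖∫₀^a e^{itω} F(ω) dω‖ ≤ C t^{-3/2}` for every `t > 1`. -/
theorem statement9 (B : Type*) [NormedAddCommGroup B] [NormedSpace ℂ B] [CompleteSpace B]
    (a : ℝ) (ha : 0 < a) (C₀ : ℝ) (hC₀ : 0 < C₀) :
    ∃ C : ℝ, 0 < C ∧ ∀ F F' F'' : ℝ → B,
      (∀ ω ∈ Set.Ioo (0 : ℝ) a, HasDerivAt F (F' ω) ω) →
      (∀ ω ∈ Set.Ioo (0 : ℝ) a, HasDerivAt F' (F'' ω) ω) →
      ContinuousOn F'' (Set.Ioo (0 : ℝ) a) →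
      Tendsto F (nhdsWithin 0 (Set.Ioi (0 : ℝ))) (nhds 0) →
      Tendsto F (nhdsWithin a (Set.Iio a)) (nhds 0) →
      (∀ ω ∈ Set.Ioo (0 : ℝ) a, ‖F' ω‖ ≤ C₀ * ω ^ (-(1 : ℝ) / 2)) →
      (∀ ω ∈ Set.Ioo (0 : ℝ) a, ‖F'' ω‖ ≤ C₀ * ω ^ (-(3 : ℝ) / 2)) →
      ∀ t : ℝ, 1 < t →
        ‖∫ ω in (0 : ℝ)..a, Complex.exp (Complex.I * (t : ℂ) * (ω : ℂ)) • F ω‖ ≤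
          C * t ^ (-(3 : ℝ) / 2) := by
  refine ⟨(5 + a ^ (-(1:ℝ)/2)) * C₀, by positivity, ?_⟩
  intro F F' F'' hd1 hd2 hF''c h00 haa hb1 hb2 t ht
  have ht0 : (0:ℝ) < t := lt_trans one_pos ht
  have htne : t ≠ 0 := ht0.ne'
  have hec : Continuous fun ω : ℝ => Complex.exp (Complex.I * t * ω) :=
    Complex.continuous_exp.comp (continuous_const.mul Complex.continuous_ofReal)
  have hF'c : ContinuousOn F' (Set.Ioo 0 a) :=
    fun ω hω => ((hd2 ω hω).continuousAt).continuousWithinAt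
  have hnormc : ‖(Complex.I * (t:ℂ))⁻¹‖ = t⁻¹ := by
    rw [norm_inv, norm_mul, Complex.norm_I, one_mul, Complex.norm_real,
      Real.norm_eq_abs, abs_of_pos ht0]
  -- integrable comparison function ω ↦ C₀ ω^{-1/2}
  have hg1 : IntegrableOn (fun ω : ℝ => C₀ * ω ^ (-(1:ℝ)/2)) (Set.Ioo 0 a) volume := by
    have h1 : IntervalIntegrable (fun ω : ℝ => ω ^ (-(1:ℝ)/2)) volume 0 a :=
      intervalIntegrable_rpow' (by norm_num)
    exact ((intervalIntegrable_iff_integrableOn_Ioc_of_le ha.le).mp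
      (h1.const_mul C₀)).mono_set Set.Ioo_subset_Ioc_self
  -- integrability of the F' integrand
  have hJint : IntegrableOn (fun ω : ℝ => Complex.exp (Complex.I * t * ω) • F' ω)
      (Set.Ioo 0 a) volume := by
    apply Integrable.mono' hg1
      (((hec.continuousOn).smul hF'c).aestronglyMeasurable measurableSet_Ioo)
    rw [ae_restrict_iff' measurableSet_Ioo]
    exact ae_of_all _ fun ω hω => by
      change ‖Complex.exp (Complex.I * (t:ℂ) * (ω:ℂ)) • F' ω‖ ≤ _
      rw [norm_smul, norm_exp_It, one_mul]; exact hb1 ω hω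
  -- pointwise bound on F
  have hFbd : ∀ ω ∈ Set.Ioo (0:ℝ) a, ‖F ω‖ ≤ 2 * C₀ * ω ^ ((1:ℝ)/2) := by
    intro ω hω
    obtain ⟨hω0, hωa⟩ := hω
    have hev : ∀ ε ∈ Set.Ioo (0:ℝ) ω, ‖F ω‖ ≤ 2 * C₀ * ω ^ ((1:ℝ)/2) + ‖F ε‖ := by
      intro ε hε
      have hsub : Set.uIcc ε ω ⊆ Set.Ioo 0 a := by
        rw [Set.uIcc_of_le hε.2.le]
        exact fun x hx => ⟨lt_of_lt_of_le hε.1 hx.1, lt_of_le_of_lt hx.2 hωa⟩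
      have hFTC : ∫ s in ε..ω, F' s = F ω - F ε :=
        integral_eq_sub_of_hasDerivAt (fun s hs => hd1 s (hsub hs))
          ((hF'c.mono hsub).intervalIntegrable)
      have hgi : IntervalIntegrable (fun s : ℝ => C₀ * s ^ (-(1:ℝ)/2)) volume ε ω :=
        (intervalIntegrable_rpow' (by norm_num)).const_mul C₀
      have hnb : ‖∫ s in ε..ω, F' s‖ ≤ |∫ s in ε..ω, C₀ * s ^ (-(1:ℝ)/2)| := by
        apply intervalIntegral.norm_integral_le_abs_of_norm_le _ hgi
        rw [Set.uIoc_of_le hε.2.le, ae_restrict_iff' measurableSet_Ioc]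
        exact ae_of_all _ fun s hs => hb1 s (hsub (by
          rw [Set.uIcc_of_le hε.2.le]; exact ⟨hs.1.le, hs.2⟩))
      have hval : ∫ s in ε..ω, C₀ * s ^ (-(1:ℝ)/2)
          = C₀ * ((ω ^ ((1:ℝ)/2) - ε ^ ((1:ℝ)/2)) / (1/2)) := by
        rw [intervalIntegral.integral_const_mul, integral_rpow (Or.inl (by norm_num)),
          show -(1:ℝ)/2 + 1 = 1/2 by norm_num]
      have hεnn : 0 ≤ ε ^ ((1:ℝ)/2) := Real.rpow_nonneg hε.1.le _
      have hεω : ε ^ ((1:ℝ)/2) ≤ ω ^ ((1:ℝ)/2) :=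
        Real.rpow_le_rpow hε.1.le hε.2.le (by norm_num)
      have hb' : |∫ s in ε..ω, C₀ * s ^ (-(1:ℝ)/2)| ≤ 2 * C₀ * ω ^ ((1:ℝ)/2) := by
        rw [hval, abs_of_nonneg (by nlinarith)]
        nlinarith
      have htri : ‖F ω‖ ≤ ‖F ω - F ε‖ + ‖F ε‖ := by
        calc ‖F ω‖ = ‖(F ω - F ε) + F ε‖ := by rw [sub_add_cancel]
          _ ≤ ‖F ω - F ε‖ + ‖F ε‖ := norm_add_le _ _
      rw [← hFTC] at htri
      linarith [le_trans hnb hb']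
    have hT : Tendsto (fun ε => 2 * C₀ * ω ^ ((1:ℝ)/2) + ‖F ε‖) (𝓝[>] (0:ℝ))
        (𝓝 (2 * C₀ * ω ^ ((1:ℝ)/2) + 0)) :=
      tendsto_const_nhds.add (by simpa using h00.norm)
    have hevf : ∀ᶠ ε in 𝓝[>] (0:ℝ), ‖F ω‖ ≤ 2 * C₀ * ω ^ ((1:ℝ)/2) + ‖F ε‖ := by
      filter_upwards [Ioo_mem_nhdsGT_of_mem ⟨le_refl (0:ℝ), hω0⟩] with ε hε using hev ε hε
    have := ge_of_tendsto hT hevf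
    simpa using this
  -- integrability of the F integrand
  have hFint : IntegrableOn (fun ω : ℝ => Complex.exp (Complex.I * t * ω) • F ω)
      (Set.Ioo 0 a) volume := by
    have hFc : ContinuousOn F (Set.Ioo 0 a) :=
      fun ω hω => ((hd1 ω hω).continuousAt).continuousWithinAt
    apply Integrable.mono' (g := fun _ : ℝ => 2 * C₀ * a ^ ((1:ℝ)/2))
      (integrableOn_const measure_Ioo_lt_top.ne)
      (((hec.continuousOn).smul hFc).aestronglyMeasurable measurableSet_Ioo)
    rw [ae_restrict_iff' measurableSet_Ioo]
    refine ae_of_all _ fun ω hω => ?_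
    change ‖Complex.exp (Complex.I * (t:ℂ) * (ω:ℂ)) • F ω‖ ≤ _
    rw [norm_smul, norm_exp_It, one_mul]
    refine (hFbd ω hω).trans ?_
    have := Real.rpow_le_rpow hω.1.le hω.2.le (by norm_num : (0:ℝ) ≤ 1/2)
    nlinarith
  -- first integration by parts
  have step1 := ibp_limit (G := F) (G' := F') htne ha hd1 hF'c hFint hJint
  have hl : Tendsto (fun n : ℕ => 0 + (a - 0)/((n:ℝ) + 2)) atTop (𝓝[>] (0:ℝ)) := by
    apply tendsto_nhdsWithin_of_tendsto_nhds_of_eventually_within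
    · simpa using (seq_tendsto ha).const_add 0
    · exact Eventually.of_forall fun n => (seq_lt ha n).1
  have hu : Tendsto (fun n : ℕ => a - (a - 0)/((n:ℝ) + 2)) atTop (𝓝[<] a) := by
    apply tendsto_nhdsWithin_of_tendsto_nhds_of_eventually_within
    · simpa using (seq_tendsto ha).const_sub a
    · exact Eventually.of_forall fun n => (seq_lt ha n).2.2
  have hbd0 : Tendsto (fun n : ℕ =>
      ((Complex.I * t)⁻¹ * Complex.exp (Complex.I * t * ((a - (a - 0)/((n:ℝ)+2) : ℝ) : ℂ))) •
          F (a - (a - 0)/((n:ℝ)+2))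
        - ((Complex.I * t)⁻¹ * Complex.exp (Complex.I * t * ((0 + (a - 0)/((n:ℝ)+2) : ℝ) : ℂ))) •
          F (0 + (a - 0)/((n:ℝ)+2))) atTop (𝓝 0) := by
    have h1 : Tendsto (fun n : ℕ =>
        ((Complex.I * t)⁻¹ * Complex.exp (Complex.I * t * ((a - (a - 0)/((n:ℝ)+2) : ℝ) : ℂ))) •
          F (a - (a - 0)/((n:ℝ)+2))) atTop (𝓝 0) := by
      refine squeeze_zero_norm (a := fun n : ℕ => t⁻¹ * ‖F (a - (a - 0)/((n:ℝ)+2))‖)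
        (fun n => (norm_uu_smul ht0 _ _).le) ?_
      simpa using ((haa.comp hu).norm).const_mul t⁻¹
    have h2 : Tendsto (fun n : ℕ =>
        ((Complex.I * t)⁻¹ * Complex.exp (Complex.I * t * ((0 + (a - 0)/((n:ℝ)+2) : ℝ) : ℂ))) •
          F (0 + (a - 0)/((n:ℝ)+2))) atTop (𝓝 0) := by
      refine squeeze_zero_norm (a := fun n : ℕ => t⁻¹ * ‖F (0 + (a - 0)/((n:ℝ)+2))‖)
        (fun n => (norm_uu_smul ht0 _ _).le) ?_
      simpa using ((h00.comp hl).norm).const_mul t⁻¹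
    simpa using h1.sub h2
  have hIJ : (∫ ω in Set.Ioo (0:ℝ) a, Complex.exp (Complex.I * t * ω) • F ω)
      + (Complex.I * t)⁻¹ • ∫ ω in Set.Ioo (0:ℝ) a, Complex.exp (Complex.I * t * ω) • F' ω
      = 0 := tendsto_nhds_unique step1 hbd0
  rw [intervalIntegral.integral_of_le ha.le, MeasureTheory.integral_Ioc_eq_integral_Ioo,
    eq_neg_of_add_eq_zero_left hIJ, norm_neg, norm_smul, hnormc]
  -- it remains to bound ‖J‖
  have hB : t⁻¹ ≤ t ^ (-(1:ℝ)/2) := by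
    rw [show t⁻¹ = t ^ (-1:ℝ) by rw [Real.rpow_neg ht0.le, Real.rpow_one]]
    exact Real.rpow_le_rpow_of_exponent_le ht.le (by norm_num)
  have hXpos : 0 < t ^ (-(1:ℝ)/2) := Real.rpow_pos_of_pos ht0 _
  have ha' : 0 < a ^ (-(1:ℝ)/2) := Real.rpow_pos_of_pos ha _
  suffices hJb : ‖∫ ω in Set.Ioo (0:ℝ) a, Complex.exp (Complex.I * t * ω) • F' ω‖
      ≤ (5 + a ^ (-(1:ℝ)/2)) * C₀ * t ^ (-(1:ℝ)/2) by
    have hmul : t⁻¹ * t ^ (-(1:ℝ)/2) = t ^ (-(3:ℝ)/2) := by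
      rw [show t⁻¹ = t ^ (-1:ℝ) by rw [Real.rpow_neg ht0.le, Real.rpow_one],
        ← Real.rpow_add ht0]
      norm_num
    calc t⁻¹ * ‖∫ ω in Set.Ioo (0:ℝ) a, Complex.exp (Complex.I * t * ω) • F' ω‖
        ≤ t⁻¹ * ((5 + a ^ (-(1:ℝ)/2)) * C₀ * t ^ (-(1:ℝ)/2)) :=
          mul_le_mul_of_nonneg_left hJb (inv_nonneg.2 ht0.le)
      _ = (5 + a ^ (-(1:ℝ)/2)) * C₀ * (t⁻¹ * t ^ (-(1:ℝ)/2)) := by ring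
      _ = (5 + a ^ (-(1:ℝ)/2)) * C₀ * t ^ (-(3:ℝ)/2) := by rw [hmul]
  rcases lt_or_ge t⁻¹ a with hca | hca
  · -- main case: split the integral at t⁻¹
    have hr0 : (0:ℝ) < t⁻¹ := inv_pos.2 ht0
    have hrmem : t⁻¹ ∈ Set.Ioo (0:ℝ) a := ⟨hr0, hca⟩
    have hsub1 : Set.Ioc (0:ℝ) t⁻¹ ⊆ Set.Ioo 0 a :=
      fun x hx => ⟨hx.1, lt_of_le_of_lt hx.2 hca⟩
    have hsub2 : Set.Ioo t⁻¹ a ⊆ Set.Ioo 0 a := fun x hx => ⟨lt_trans hr0 hx.1, hx.2⟩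
    have hdisj : Disjoint (Set.Ioc (0:ℝ) t⁻¹) (Set.Ioo t⁻¹ a) :=
      Set.disjoint_left.2 fun x hx hx' => absurd hx'.1 (not_lt.2 hx.2)
    have hunion : Set.Ioc (0:ℝ) t⁻¹ ∪ Set.Ioo t⁻¹ a = Set.Ioo 0 a :=
      Set.Ioc_union_Ioo_eq_Ioo hr0.le hca
    have hsplit : (∫ ω in Set.Ioo (0:ℝ) a, Complex.exp (Complex.I * t * ω) • F' ω)
        = (∫ ω in Set.Ioc (0:ℝ) t⁻¹, Complex.exp (Complex.I * t * ω) • F' ω)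
          + ∫ ω in Set.Ioo t⁻¹ a, Complex.exp (Complex.I * t * ω) • F' ω := by
      rw [← hunion, setIntegral_union hdisj measurableSet_Ioo
        (hJint.mono_set hsub1) (hJint.mono_set hsub2)]
    -- bound on the piece near zero
    have hT1 : ‖∫ ω in Set.Ioc (0:ℝ) t⁻¹, Complex.exp (Complex.I * t * ω) • F' ω‖
        ≤ C₀ * (2 * t ^ (-(1:ℝ)/2)) := by
      have h1 : ‖∫ ω in Set.Ioc (0:ℝ) t⁻¹, Complex.exp (Complex.I * t * ω) • F' ω‖
          ≤ ∫ ω in Set.Ioc (0:ℝ) t⁻¹, C₀ * ω ^ (-(1:ℝ)/2) := by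
        apply MeasureTheory.norm_integral_le_of_norm_le (hg1.mono_set hsub1)
        rw [ae_restrict_iff' measurableSet_Ioc]
        exact ae_of_all _ fun ω hω => by
          rw [norm_smul, norm_exp_It, one_mul]; exact hb1 ω (hsub1 hω)
      have hval : ∫ ω in Set.Ioc (0:ℝ) t⁻¹, C₀ * ω ^ (-(1:ℝ)/2)
          = C₀ * (2 * t⁻¹ ^ ((1:ℝ)/2)) := by
        rw [MeasureTheory.integral_Ioc_eq_integral_Ioo, eval_rpow_half C₀ hr0]
      rw [hval] at h1
      have e1 : t⁻¹ ^ ((1:ℝ)/2) = t ^ (-(1:ℝ)/2) := by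
        rw [Real.inv_rpow ht0.le, show (-(1:ℝ)/2) = -((1:ℝ)/2) by norm_num,
          Real.rpow_neg ht0.le]
      rwa [e1] at h1
    -- second integration by parts on (t⁻¹, a)
    have hd2' : ∀ ω ∈ Set.Ioo t⁻¹ a, HasDerivAt F' (F'' ω) ω :=
      fun ω hω => hd2 ω (hsub2 hω)
    have hKint := hJint.mono_set hsub2
    have hg3 : IntegrableOn (fun ω : ℝ => C₀ * ω ^ (-(3:ℝ)/2)) (Set.Ioo t⁻¹ a) volume := by
      have h1 : IntervalIntegrable (fun ω : ℝ => ω ^ (-(3:ℝ)/2)) volume t⁻¹ a :=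
        intervalIntegrable_rpow (Or.inr (by
          rw [Set.uIcc_of_le hca.le]; exact fun h => absurd h.1 (not_le.2 hr0)))
      exact ((intervalIntegrable_iff_integrableOn_Ioc_of_le hca.le).mp
        (h1.const_mul C₀)).mono_set Set.Ioo_subset_Ioc_self
    have hMint : IntegrableOn (fun ω : ℝ => Complex.exp (Complex.I * t * ω) • F'' ω)
        (Set.Ioo t⁻¹ a) volume := by
      apply Integrable.mono' hg3
        (((hec.continuousOn).smul (hF''c.mono hsub2)).aestronglyMeasurable measurableSet_Ioo)
      rw [ae_restrict_iff' measurableSet_Ioo]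
      exact ae_of_all _ fun ω hω => by
        change ‖Complex.exp (Complex.I * (t:ℂ) * (ω:ℂ)) • F'' ω‖ ≤ _
        rw [norm_smul, norm_exp_It, one_mul]; exact hb2 ω (hsub2 hω)
    have step2 := ibp_limit (G := F') (G' := F'') htne hca hd2' (hF''c.mono hsub2) hKint hMint
    have htl2 : Tendsto (fun n : ℕ => t⁻¹ + (a - t⁻¹)/((n:ℝ)+2)) atTop (𝓝 t⁻¹) := by
      simpa using (seq_tendsto hca).const_add t⁻¹
    have hlow : Tendsto (fun n : ℕ =>
        ((Complex.I * t)⁻¹ * Complex.exp (Complex.I * t * ((t⁻¹ + (a - t⁻¹)/((n:ℝ)+2) : ℝ) : ℂ))) •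
          F' (t⁻¹ + (a - t⁻¹)/((n:ℝ)+2))) atTop
        (𝓝 (((Complex.I * t)⁻¹ * Complex.exp (Complex.I * t * ((t⁻¹ : ℝ) : ℂ))) • F' t⁻¹)) := by
      have hg : Continuous fun ω : ℝ =>
          (Complex.I * (t:ℂ))⁻¹ * Complex.exp (Complex.I * t * ω) := continuous_const.mul hec
      exact Tendsto.smul ((hg.tendsto t⁻¹).comp htl2)
        (((hd2 t⁻¹ hrmem).continuousAt).tendsto.comp htl2)
    have hup : Tendsto (fun n : ℕ =>
        ((Complex.I * t)⁻¹ * Complex.exp (Complex.I * t * ((a - (a - t⁻¹)/((n:ℝ)+2) : ℝ) : ℂ))) •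
          F' (a - (a - t⁻¹)/((n:ℝ)+2))) atTop
        (𝓝 ((∫ ω in Set.Ioo t⁻¹ a, Complex.exp (Complex.I * t * ω) • F' ω)
          + (Complex.I * t)⁻¹ • (∫ ω in Set.Ioo t⁻¹ a, Complex.exp (Complex.I * t * ω) • F'' ω)
          + ((Complex.I * t)⁻¹ * Complex.exp (Complex.I * t * ((t⁻¹ : ℝ) : ℂ))) • F' t⁻¹)) :=
      (step2.add hlow).congr fun n => sub_add_cancel _ _
    -- bound the limit of the upper boundary terms
    have hu2 : Tendsto (fun n : ℕ => a - (a - t⁻¹)/((n:ℝ)+2)) atTop (𝓝 a) := by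
      simpa using (seq_tendsto hca).const_sub a
    have hrpowT : Tendsto (fun n : ℕ => t⁻¹ * (C₀ * (a - (a - t⁻¹)/((n:ℝ)+2)) ^ (-(1:ℝ)/2)))
        atTop (𝓝 (t⁻¹ * (C₀ * a ^ (-(1:ℝ)/2)))) := by
      have hc1 : ContinuousAt (fun x : ℝ => x ^ (-(1:ℝ)/2)) a :=
        Real.continuousAt_rpow_const a _ (Or.inl ha.ne')
      exact ((hc1.tendsto.comp hu2).const_mul C₀).const_mul t⁻¹
    have hLle : ‖(∫ ω in Set.Ioo t⁻¹ a, Complex.exp (Complex.I * t * ω) • F' ω)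
        + (Complex.I * t)⁻¹ • (∫ ω in Set.Ioo t⁻¹ a, Complex.exp (Complex.I * t * ω) • F'' ω)
        + ((Complex.I * t)⁻¹ * Complex.exp (Complex.I * t * ((t⁻¹ : ℝ) : ℂ))) • F' t⁻¹‖
        ≤ t⁻¹ * (C₀ * a ^ (-(1:ℝ)/2)) := by
      refine le_of_tendsto_of_tendsto' hup.norm hrpowT fun n => ?_
      have hmem : a - (a - t⁻¹)/((n:ℝ)+2) ∈ Set.Ioo (0:ℝ) a := by
        obtain ⟨h1, h2, h3⟩ := seq_lt hca n
        exact ⟨lt_trans hr0 (lt_of_lt_of_le h1 h2), h3⟩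
      rw [norm_uu_smul ht0]
      exact mul_le_mul_of_nonneg_left (hb1 _ hmem) (inv_nonneg.2 ht0.le)
    -- rpow identities
    have e2 : t⁻¹ ^ (-(1:ℝ)/2) = t ^ ((1:ℝ)/2) := by
      rw [Real.inv_rpow ht0.le, show (-(1:ℝ)/2) = -((1:ℝ)/2) by norm_num,
        Real.rpow_neg ht0.le, inv_inv]
    have hA : t⁻¹ * t ^ ((1:ℝ)/2) = t ^ (-(1:ℝ)/2) := by
      rw [show t⁻¹ = t ^ (-1:ℝ) by rw [Real.rpow_neg ht0.le, Real.rpow_one],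
        ← Real.rpow_add ht0]
      norm_num
    -- norms of the other pieces
    have hP1 : ‖((Complex.I * t)⁻¹ * Complex.exp (Complex.I * t * ((t⁻¹ : ℝ) : ℂ))) • F' t⁻¹‖
        ≤ t⁻¹ * (C₀ * t ^ ((1:ℝ)/2)) := by
      rw [norm_uu_smul ht0]
      refine mul_le_mul_of_nonneg_left ?_ (inv_nonneg.2 ht0.le)
      have := hb1 t⁻¹ hrmem
      rwa [e2] at this
    have hMle : ‖∫ ω in Set.Ioo t⁻¹ a, Complex.exp (Complex.I * t * ω) • F'' ω‖
        ≤ C₀ * ((t ^ ((1:ℝ)/2) - a ^ (-(1:ℝ)/2)) * 2) := by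
      have h1 : ‖∫ ω in Set.Ioo t⁻¹ a, Complex.exp (Complex.I * t * ω) • F'' ω‖
          ≤ ∫ ω in Set.Ioo t⁻¹ a, C₀ * ω ^ (-(3:ℝ)/2) := by
        apply MeasureTheory.norm_integral_le_of_norm_le hg3
        rw [ae_restrict_iff' measurableSet_Ioo]
        exact ae_of_all _ fun ω hω => by
          rw [norm_smul, norm_exp_It, one_mul]; exact hb2 ω (hsub2 hω)
      rwa [eval_rpow_threehalf C₀ hr0 hca.le, e2] at h1
    have hcM : ‖(Complex.I * t)⁻¹ • (∫ ω in Set.Ioo t⁻¹ a,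
        Complex.exp (Complex.I * t * ω) • F'' ω)‖
        ≤ t⁻¹ * (C₀ * ((t ^ ((1:ℝ)/2) - a ^ (-(1:ℝ)/2)) * 2)) := by
      rw [norm_smul, hnormc]
      exact mul_le_mul_of_nonneg_left hMle (inv_nonneg.2 ht0.le)
    -- assemble the bound for K
    have hKeq : (∫ ω in Set.Ioo t⁻¹ a, Complex.exp (Complex.I * t * ω) • F' ω)
        = ((∫ ω in Set.Ioo t⁻¹ a, Complex.exp (Complex.I * t * ω) • F' ω)
            + (Complex.I * t)⁻¹ • (∫ ω in Set.Ioo t⁻¹ a, Complex.exp (Complex.I * t * ω) • F'' ω)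
            + ((Complex.I * t)⁻¹ * Complex.exp (Complex.I * t * ((t⁻¹ : ℝ) : ℂ))) • F' t⁻¹)
          - ((Complex.I * t)⁻¹ * Complex.exp (Complex.I * t * ((t⁻¹ : ℝ) : ℂ))) • F' t⁻¹
          - (Complex.I * t)⁻¹ • (∫ ω in Set.Ioo t⁻¹ a,
              Complex.exp (Complex.I * t * ω) • F'' ω) := by abel
    have hKle : ‖∫ ω in Set.Ioo t⁻¹ a, Complex.exp (Complex.I * t * ω) • F' ω‖
        ≤ t⁻¹ * (C₀ * a ^ (-(1:ℝ)/2)) + t⁻¹ * (C₀ * t ^ ((1:ℝ)/2))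
          + t⁻¹ * (C₀ * ((t ^ ((1:ℝ)/2) - a ^ (-(1:ℝ)/2)) * 2)) := by
      rw [hKeq]
      refine le_trans (norm_sub_le _ _) ?_
      refine add_le_add (le_trans (norm_sub_le _ _) (add_le_add hLle hP1)) hcM |>.trans ?_
      linarith
    -- combine everything
    have htri : ‖∫ ω in Set.Ioo (0:ℝ) a, Complex.exp (Complex.I * t * ω) • F' ω‖
        ≤ ‖∫ ω in Set.Ioc (0:ℝ) t⁻¹, Complex.exp (Complex.I * t * ω) • F' ω‖
          + ‖∫ ω in Set.Ioo t⁻¹ a, Complex.exp (Complex.I * t * ω) • F' ω‖ := by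
      rw [hsplit]; exact norm_add_le _ _
    have f1 : t⁻¹ * (C₀ * t ^ ((1:ℝ)/2)) = C₀ * t ^ (-(1:ℝ)/2) := by
      rw [← hA]; ring
    have f4 : t⁻¹ * (C₀ * ((t ^ ((1:ℝ)/2) - a ^ (-(1:ℝ)/2)) * 2))
        = 2 * (C₀ * t ^ (-(1:ℝ)/2)) - 2 * (C₀ * (t⁻¹ * a ^ (-(1:ℝ)/2))) := by
      rw [← hA]; ring
    have f3 : C₀ * (t⁻¹ * a ^ (-(1:ℝ)/2)) ≤ C₀ * (t ^ (-(1:ℝ)/2) * a ^ (-(1:ℝ)/2)) := by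
      have := mul_le_mul_of_nonneg_right hB ha'.le
      exact mul_le_mul_of_nonneg_left this hC₀.le
    have f5 : t⁻¹ * (C₀ * a ^ (-(1:ℝ)/2)) ≤ t ^ (-(1:ℝ)/2) * (C₀ * a ^ (-(1:ℝ)/2)) :=
      mul_le_mul_of_nonneg_right hB (by positivity)
    have f6 : 0 ≤ C₀ * (t⁻¹ * a ^ (-(1:ℝ)/2)) := by positivity
    have hgoal : (5 + a ^ (-(1:ℝ)/2)) * C₀ * t ^ (-(1:ℝ)/2)
        = 5 * (C₀ * t ^ (-(1:ℝ)/2)) + C₀ * (t ^ (-(1:ℝ)/2) * a ^ (-(1:ℝ)/2)) := by ring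
    rw [hgoal]
    linarith [hT1, hKle, htri, f1, f4, f3, f5, f6]
  · -- easy case : a ≤ t⁻¹
    have h1 : ‖∫ ω in Set.Ioo (0:ℝ) a, Complex.exp (Complex.I * t * ω) • F' ω‖
        ≤ ∫ ω in Set.Ioo (0:ℝ) a, C₀ * ω ^ (-(1:ℝ)/2) := by
      apply MeasureTheory.norm_integral_le_of_norm_le hg1
      rw [ae_restrict_iff' measurableSet_Ioo]
      exact ae_of_all _ fun ω hω => by
        rw [norm_smul, norm_exp_It, one_mul]; exact hb1 ω hω
    rw [eval_rpow_half C₀ ha] at h1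
    have h2 : a ^ ((1:ℝ)/2) ≤ t ^ (-(1:ℝ)/2) := by
      have h3 := Real.rpow_le_rpow ha.le hca (by norm_num : (0:ℝ) ≤ 1/2)
      rwa [Real.inv_rpow ht0.le, ← Real.rpow_neg ht0.le,
        show -((1:ℝ)/2) = -(1:ℝ)/2 by norm_num] at h3
    have hgoal : (5 + a ^ (-(1:ℝ)/2)) * C₀ * t ^ (-(1:ℝ)/2)
        = 5 * (C₀ * t ^ (-(1:ℝ)/2)) + C₀ * (t ^ (-(1:ℝ)/2) * a ^ (-(1:ℝ)/2)) := by ring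
    have hpos2 : 0 ≤ C₀ * (t ^ (-(1:ℝ)/2) * a ^ (-(1:ℝ)/2)) := by positivity
    have hXC : 0 ≤ C₀ * t ^ (-(1:ℝ)/2) := by positivity
    rw [hgoal]
    linarith [h1, mul_le_mul_of_nonneg_left h2 hC₀.le]
end

section
/- Fix σ > 5/2. Then there exist C > 0 and ω₀ > 0 such that for all 0 < ω < ω₀, the boundary value of the free resolvent satisfies ‖R₀^+(ω) - i R₋₁/√ω - R₀‖_{B(σ,-σ)} ≤ C √ω, where (R₋₁ f)_n = (1/2) ∑_{m∈ℤ} f_m and (R₀ f)_n = -(1/2) ∑_{m∈ℤ} |n-m| f_m. Moreover, R₋₁ and R₀ are Hilbert–Schmidt operators from l²_{σ'}(ℤ) to l²_{-σ'}(ℤ) for every σ' > 3/2. -/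
open scoped ENNReal NNReal BigOperators
open Complex Filter Topology

noncomputable section
set_option maxHeartbeats 1000000

/-- The weight `(1+n²)^σ` as an extended nonnegative real. -/
def wt (σ : ℝ) (n : ℤ) : ℝ≥0∞ := ENNReal.ofReal (1 + (n : ℝ) ^ 2) ^ σ

/-- The weighted `l²_σ` norm `(∑ (1+n²)^σ |u_n|²)^{1/2}` of a complex sequence (possibly `∞`). -/
def wnorm2 (σ : ℝ) (u : ℤ → ℂ) : ℝ≥0∞ :=
  (∑' n : ℤ, wt σ n * (‖u n‖₊ : ℝ≥0∞) ^ 2) ^ (1 / 2 : ℝ)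

/-- The weighted `l¹_σ` norm `∑ (1+n²)^{σ/2} |u_n|` of a real sequence (possibly `∞`). -/
def wnorm1 (σ : ℝ) (u : ℤ → ℝ) : ℝ≥0∞ :=
  ∑' n : ℤ, wt (σ / 2) n * (‖u n‖₊ : ℝ≥0∞)

/-- The discrete Schrödinger operator `H = -Δ + V` acting on complex sequences:
`(Hφ)_n = -(φ_{n+1} + φ_{n-1} - 2 φ_n) + V_n φ_n`. -/
def Hop (V : ℤ → ℝ) (φ : ℤ → ℂ) : ℤ → ℂ :=
  fun n => -(φ (n + 1) + φ (n - 1) - 2 * φ n) + (V n : ℂ) * φ n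

/-! ### Auxiliary lemmas -/

lemma abs_self_sub_sin_le (x : ℝ) : |x - Real.sin x| ≤ 2 * x ^ 2 := by
  have key : ∀ y : ℝ, 0 ≤ y → |y - Real.sin y| ≤ 2 * y ^ 2 := by
    intro y hy
    rw [_root_.abs_of_nonneg (by linarith [Real.sin_le hy])]
    rcases eq_or_lt_of_le hy with h0 | h0
    · simp [← h0]
    rcases le_or_gt y 1 with h | h
    · nlinarith [Real.sin_gt_sub_cube h0]
    · nlinarith [Real.neg_one_le_sin y]
  rcases le_or_gt 0 x with hx | hx
  · exact key x hx
  · have := key (-x) (by linarith)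
    rw [Real.sin_neg] at this
    calc |x - Real.sin x| = |-x - Real.sin (-x)| := by
          rw [Real.sin_neg]; rw [abs_sub_comm]; ring_nf
      _ ≤ 2 * x ^ 2 := by rw [Real.sin_neg] at *; nlinarith [this]

lemma abs_one_sub_cos_le (x : ℝ) : |1 - Real.cos x| ≤ x ^ 2 / 2 := by
  have h1 := Real.one_sub_sq_div_two_le_cos (x := x)
  have h2 := Real.cos_le_one x
  rw [_root_.abs_of_nonneg (by linarith)]
  linarith

lemma summable_weight {q : ℝ} (hq : q < -(1/2)) :
    Summable fun n : ℤ => (1 + (n : ℝ) ^ 2) ^ q := by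
  have hnat : Summable fun k : ℕ => (1 + (k : ℝ) ^ 2) ^ q := by
    have hs : Summable fun k : ℕ => ((k : ℝ) + 1) ^ (2 * q) * 2 ^ (-q) := by
      apply Summable.mul_right
      have h := (summable_nat_add_iff (f := fun n : ℕ => (n : ℝ) ^ (2*q)) 1).mpr
        (Real.summable_nat_rpow.mpr (by linarith))
      simpa using h
    apply Summable.of_nonneg_of_le (fun k => by positivity) _ hs
    intro k
    have h1 : ((k : ℝ) + 1) ^ 2 / 2 ≤ 1 + (k : ℝ) ^ 2 := by nlinarith [sq_nonneg ((k:ℝ) - 1)]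
    have h2 : (0:ℝ) < ((k : ℝ) + 1) ^ 2 / 2 := by positivity
    calc (1 + (k : ℝ) ^ 2) ^ q ≤ (((k : ℝ) + 1) ^ 2 / 2) ^ q :=
          Real.rpow_le_rpow_of_nonpos h2 h1 (by linarith)
      _ = ((k : ℝ) + 1) ^ (2 * q) * 2 ^ (-q) := by
          rw [Real.div_rpow (by positivity) (by norm_num), Real.rpow_neg (by norm_num),
            div_eq_mul_inv, ← Real.rpow_natCast ((k:ℝ)+1) 2, ← Real.rpow_mul (by positivity)]
          norm_num
  apply Summable.of_nat_of_neg
  · simpa using hnat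
  · simpa using hnat

lemma wtX_ne_zero (n : ℤ) : ENNReal.ofReal (1 + (n : ℝ) ^ 2) ≠ 0 := by
  simp only [ne_eq, ENNReal.ofReal_eq_zero, not_le]; positivity

lemma wt_eq_ofReal (q : ℝ) (n : ℤ) : wt q n = ENNReal.ofReal ((1 + (n : ℝ) ^ 2) ^ q) :=
  ENNReal.ofReal_rpow_of_pos (by positivity)

lemma tsum_wt_eq {q : ℝ} (hq : q < -(1/2)) :
    ∑' n : ℤ, wt q n = ENNReal.ofReal (∑' n : ℤ, (1 + (n : ℝ) ^ 2) ^ q) := by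
  rw [ENNReal.ofReal_tsum_of_nonneg (fun n => by positivity) (summable_weight hq)]
  exact tsum_congr fun n => wt_eq_ofReal q n

lemma ennreal_cauchy_schwarz (a b : ℤ → ℝ≥0∞) :
    ∑' m, a m * b m ≤ (∑' m, a m ^ (2:ℝ)) ^ (1/2:ℝ) * (∑' m, b m ^ (2:ℝ)) ^ (1/2:ℝ) := by
  have hpq : (2:ℝ).HolderConjugate 2 := ⟨by norm_num, by norm_num, by norm_num⟩
  have h := ENNReal.lintegral_mul_le_Lp_mul_Lq (MeasureTheory.Measure.count (α := ℤ)) hpq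
    (f := a) (g := b) Measurable.of_discrete.aemeasurable Measurable.of_discrete.aemeasurable
  simpa [MeasureTheory.lintegral_count] using h

lemma wt_mul_sq (σ : ℝ) (n : ℤ) :
    wt (-σ) n * (ENNReal.ofReal (1 + (n:ℝ)^2))^2 = wt (2-σ) n := by
  rw [wt, wt, ← ENNReal.rpow_natCast (ENNReal.ofReal (1 + (n:ℝ)^2)) 2,
    ← ENNReal.rpow_add _ _ (wtX_ne_zero n) ENNReal.ofReal_ne_top]
  norm_num
  rw [show (-σ+2) = 2-σ by ring]

lemma wt_mul_one (σ : ℝ) (n : ℤ) :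
    wt (-σ) n * ENNReal.ofReal (1 + (n:ℝ)^2) = wt (1-σ) n := by
  rw [wt, wt]
  nth_rewrite 2 [← ENNReal.rpow_one (ENNReal.ofReal (1 + (n:ℝ)^2))]
  rw [← ENNReal.rpow_add _ _ (wtX_ne_zero n) ENNReal.ofReal_ne_top,
    show (-σ+1) = 1-σ by ring]

lemma wnorm2_le_of_bound (σ : ℝ) (u : ℤ → ℂ) (c : ℝ)
    (h : ∀ n : ℤ, ‖u n‖ ≤ c * (1 + (n:ℝ)^2)) :
    wnorm2 (-σ) u ≤ ENNReal.ofReal c * (∑' n : ℤ, wt (2-σ) n) ^ (1/2:ℝ) := by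
  have hc : 0 ≤ c := by
    have := (norm_nonneg (u 0)).trans (h 0)
    nlinarith
  have hle : ∀ n : ℤ, wt (-σ) n * ((‖u n‖₊ : ℝ≥0∞))^2
      ≤ ENNReal.ofReal c ^ 2 * wt (2-σ) n := by
    intro n
    have h1 : ((‖u n‖₊ : ℝ≥0∞))^2 ≤ (ENNReal.ofReal c * ENNReal.ofReal (1+(n:ℝ)^2))^2 := by
      gcongr
      rw [← enorm_eq_nnnorm, ← ofReal_norm_eq_enorm, ← ENNReal.ofReal_mul hc]
      exact ENNReal.ofReal_le_ofReal (h n)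
    calc wt (-σ) n * (‖u n‖₊ : ℝ≥0∞)^2
        ≤ wt (-σ) n * (ENNReal.ofReal c * ENNReal.ofReal (1+(n:ℝ)^2))^2 := by gcongr
      _ = ENNReal.ofReal c ^ 2 * (wt (-σ) n * (ENNReal.ofReal (1+(n:ℝ)^2))^2) := by ring
      _ = ENNReal.ofReal c ^ 2 * wt (2-σ) n := by rw [wt_mul_sq]
  calc wnorm2 (-σ) u ≤ (∑' n : ℤ, ENNReal.ofReal c ^ 2 * wt (2-σ) n) ^ (1/2:ℝ) := by
        rw [wnorm2]
        exact ENNReal.rpow_le_rpow (ENNReal.tsum_le_tsum hle) (by norm_num)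
    _ = ENNReal.ofReal c * (∑' n : ℤ, wt (2-σ) n) ^ (1/2:ℝ) := by
        rw [ENNReal.tsum_mul_left, ENNReal.mul_rpow_of_nonneg _ _ (by norm_num : (0:ℝ) ≤ 1/2),
          ← ENNReal.rpow_natCast (ENNReal.ofReal c) 2, ← ENNReal.rpow_mul]
        norm_num

lemma weighted_l1_le (σ : ℝ) (f : ℤ → ℂ) :
    ∑' m : ℤ, ENNReal.ofReal (1 + (m:ℝ)^2) * (‖f m‖₊ : ℝ≥0∞) ≤
      (∑' m : ℤ, wt (2-σ) m) ^ (1/2:ℝ) * wnorm2 σ f := by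
  have hpt : ∀ m : ℤ, ENNReal.ofReal (1 + (m:ℝ)^2) * (‖f m‖₊ : ℝ≥0∞)
      = (ENNReal.ofReal (1 + (m:ℝ)^2) ^ ((2-σ)/2))
        * (ENNReal.ofReal (1 + (m:ℝ)^2) ^ (σ/2) * (‖f m‖₊ : ℝ≥0∞)) := by
    intro m
    rw [← mul_assoc, ← ENNReal.rpow_add _ _ (wtX_ne_zero m) ENNReal.ofReal_ne_top,
      show (2-σ)/2 + σ/2 = (1:ℝ) by ring, ENNReal.rpow_one]
  calc ∑' m : ℤ, ENNReal.ofReal (1 + (m:ℝ)^2) * (‖f m‖₊ : ℝ≥0∞)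
      = ∑' m : ℤ, (ENNReal.ofReal (1 + (m:ℝ)^2) ^ ((2-σ)/2))
        * (ENNReal.ofReal (1 + (m:ℝ)^2) ^ (σ/2) * (‖f m‖₊ : ℝ≥0∞)) := tsum_congr hpt
    _ ≤ (∑' m : ℤ, (ENNReal.ofReal (1 + (m:ℝ)^2) ^ ((2-σ)/2)) ^ (2:ℝ)) ^ (1/2:ℝ)
        * (∑' m : ℤ, (ENNReal.ofReal (1 + (m:ℝ)^2) ^ (σ/2) * (‖f m‖₊ : ℝ≥0∞)) ^ (2:ℝ)) ^ (1/2:ℝ) :=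
        ennreal_cauchy_schwarz _ _
    _ = (∑' m : ℤ, wt (2-σ) m) ^ (1/2:ℝ) * wnorm2 σ f := by
        rw [wnorm2]
        congr 1
        · congr 1
          apply tsum_congr
          intro m
          rw [wt, ← ENNReal.rpow_mul]
          norm_num
        · congr 1
          apply tsum_congr
          intro m
          rw [ENNReal.mul_rpow_of_nonneg _ _ (by norm_num : (0:ℝ) ≤ 2),
            ← ENNReal.rpow_mul, wt, ENNReal.rpow_two]
          norm_num

lemma alg (S C K CC SS : ℂ) (hS : S ≠ 0) (hC : C ≠ 0) :
    -(I / (2 * (-(S*C)))) * (CC - SS*I) - I/(2*S) + K/2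
      = I/(2*S*C) * ((CC - C) + ((-(S*C))*K - SS)*I) := by
  rw [mul_neg, div_neg, neg_neg, div_mul_eq_mul_div, div_mul_eq_mul_div,
    div_sub_div _ _ (by simp [hS, hC] : (2*(S*C) : ℂ) ≠ 0) (by simp [hS] : (2*S : ℂ) ≠ 0),
    div_add_div _ _ (by simp [hS, hC] : (2*(S*C)*(2*S) : ℂ) ≠ 0) (two_ne_zero),
    div_eq_div_iff (by simp [hS, hC] : (2*(S*C)*(2*S)*2 : ℂ) ≠ 0)
      (by simp [hS, hC] : (2*S*C : ℂ) ≠ 0)]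
  ring_nf
  simp only [Complex.I_sq]
  ring

lemma key_est {θ : ℝ} (h1 : -(Real.pi/3) < θ) (h2 : θ < 0) {k : ℝ} (hk : 0 ≤ k) :
    ‖-(Complex.I / (2 * (Real.sin θ : ℂ))) * Complex.exp (-Complex.I * (θ:ℂ) * (k:ℂ))
      - Complex.I / (2 * ((-(2 * Real.sin (θ/2)) : ℝ) : ℂ)) + (k:ℂ)/2‖
      ≤ 10 * (-(2 * Real.sin (θ/2))) * (1 + k^2) := by
  have hpi : Real.pi < 3.15 := Real.pi_lt_d2
  have hθlb : -(2/3 : ℝ) < θ/2 := by linarith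
  have hθub : θ/2 < 0 := by linarith
  obtain ⟨s, hs_def⟩ : ∃ s : ℝ, s = -(2 * Real.sin (θ/2)) := ⟨_, rfl⟩
  rw [← hs_def]
  obtain ⟨c, hc_def⟩ : ∃ c : ℝ, c = Real.cos (θ/2) := ⟨_, rfl⟩
  have hsinhalf : Real.sin (θ/2) < 0 :=
    Real.sin_neg_of_neg_of_neg_pi_lt hθub (by linarith)
  have hspos : 0 < s := by rw [hs_def]; linarith
  have hchalf : 1/2 < c := by
    have := Real.one_sub_sq_div_two_le_cos (x := θ/2)
    rw [hc_def]; nlinarith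
  have hslow : -θ ≤ (9/8) * s := by
    have hcube := Real.sin_gt_sub_cube (x := -(θ/2)) (by linarith)
    rw [Real.sin_neg] at hcube
    have ht : (0:ℝ) < -(θ/2) := by linarith
    have ht2 : (-(θ/2))^2 ≤ 4/9 := by nlinarith
    have ht3 : (-(θ/2))^3 ≤ (4/9) * (-(θ/2)) := by
      nlinarith [mul_le_mul_of_nonneg_right ht2 ht.le]
    rw [hs_def]; nlinarith
  have hθs : θ^2 ≤ 2 * s^2 := by
    nlinarith [mul_le_mul hslow hslow (by linarith : (0:ℝ) ≤ -θ) (by positivity : (0:ℝ) ≤ 9/8*s)]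
  have hsin : Real.sin θ = -(s * c) := by
    have h := Real.sin_two_mul (θ/2)
    rw [show 2 * (θ/2) = θ by ring] at h
    rw [h, hs_def, hc_def]; ring
  have hsC : ((Real.sin θ : ℝ) : ℂ) = -((s:ℂ) * (c:ℂ)) := by
    rw [hsin]; push_cast; ring
  have hsne : (s:ℂ) ≠ 0 := Complex.ofReal_ne_zero.mpr hspos.ne'
  have hcne : (c:ℂ) ≠ 0 := Complex.ofReal_ne_zero.mpr (by positivity)
  have hE : Complex.exp (-Complex.I * (θ:ℂ) * (k:ℂ))
      = ((Real.cos (θ*k) : ℝ) : ℂ) - ((Real.sin (θ*k) : ℝ) : ℂ) * Complex.I := by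
    rw [show -Complex.I * (θ:ℂ) * (k:ℂ) = ((-(θ*k) : ℝ) : ℂ) * Complex.I by
      push_cast; ring, Complex.exp_mul_I, ← Complex.ofReal_cos, ← Complex.ofReal_sin,
      Real.cos_neg, Real.sin_neg]
    push_cast; ring
  obtain ⟨a, ha_def⟩ : ∃ a : ℝ, a = Real.cos (θ*k) - c := ⟨_, rfl⟩
  obtain ⟨b, hb_def⟩ : ∃ b : ℝ, b = Real.sin θ * k - Real.sin (θ*k) := ⟨_, rfl⟩
  have haC : ((a:ℝ):ℂ) = ((Real.cos (θ*k) : ℝ):ℂ) - ((c:ℝ):ℂ) := by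
    rw [ha_def]; push_cast; ring
  have hbC : ((b:ℝ):ℂ) = -((s:ℂ)*(c:ℂ))*(k:ℂ) - ((Real.sin (θ*k) : ℝ):ℂ) := by
    rw [hb_def, ← hsC]; push_cast; ring
  have hid : -(Complex.I / (2 * (Real.sin θ : ℂ))) * Complex.exp (-Complex.I * (θ:ℂ) * (k:ℂ))
      - Complex.I / (2 * ((s : ℝ) : ℂ)) + (k:ℂ)/2
      = (Complex.I / (2 * (s:ℂ) * (c:ℂ))) * (((a:ℝ):ℂ) + ((b:ℝ):ℂ) * Complex.I) := by
    rw [hE, hsC, haC, hbC]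
    exact alg _ _ _ _ _ hsne hcne
  have hnorm1 : ‖Complex.I / (2 * (s:ℂ) * (c:ℂ))‖ = 1 / (2 * s * c) := by
    rw [show (2 * (s:ℂ) * (c:ℂ)) = ((2 * s * c : ℝ) : ℂ) by push_cast; ring,
      norm_div, Complex.norm_I, Complex.norm_real, Real.norm_eq_abs,
      _root_.abs_of_pos (by positivity)]
  have hnorm2 : ‖((a:ℝ):ℂ) + ((b:ℝ):ℂ) * Complex.I‖ ≤ |a| + |b| := by
    calc ‖((a:ℝ):ℂ) + ((b:ℝ):ℂ) * Complex.I‖ ≤ ‖((a:ℝ):ℂ)‖ + ‖((b:ℝ):ℂ) * Complex.I‖ :=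
          norm_add_le _ _
      _ = |a| + |b| := by
          rw [norm_mul, Complex.norm_I, Complex.norm_real, Complex.norm_real,
            Real.norm_eq_abs, Real.norm_eq_abs]; ring
  have hA : |a| ≤ θ^2 * (k^2/2 + 1/8) := by
    have e1 : |1 - Real.cos (θ*k)| ≤ (θ*k)^2/2 := abs_one_sub_cos_le (θ*k)
    have e2 : |1 - c| ≤ (θ/2)^2/2 := by rw [hc_def]; exact abs_one_sub_cos_le (θ/2)
    have e3 : |a| ≤ |1 - Real.cos (θ*k)| + |1 - c| := by
      calc |a| = |(Real.cos (θ*k) - 1) + (1 - c)| := by congr 1; rw [ha_def]; ring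
        _ ≤ |Real.cos (θ*k) - 1| + |1 - c| := abs_add_le _ _
        _ = |1 - Real.cos (θ*k)| + |1 - c| := by rw [abs_sub_comm (Real.cos (θ*k)) 1]
    nlinarith
  have hB : |b| ≤ 2*k*θ^2 + 2*(θ*k)^2 := by
    have e1 : |θ - Real.sin θ| ≤ 2*θ^2 := abs_self_sub_sin_le θ
    have e2 : |θ*k - Real.sin (θ*k)| ≤ 2*(θ*k)^2 := abs_self_sub_sin_le (θ*k)
    have hb2 : b = (Real.sin θ - θ)*k + (θ*k - Real.sin (θ*k)) := by rw [hb_def]; ring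
    calc |b| ≤ |(Real.sin θ - θ)*k| + |θ*k - Real.sin (θ*k)| := by
          rw [hb2]; exact abs_add_le _ _
      _ ≤ 2*k*θ^2 + 2*(θ*k)^2 := by
          rw [abs_mul, _root_.abs_of_nonneg hk, abs_sub_comm (Real.sin θ) θ]
          nlinarith [mul_le_mul_of_nonneg_right e1 hk, e2,
            abs_nonneg (θ*k - Real.sin (θ*k))]
  have hB' : |b| ≤ 2*k*θ^2 + 2*(θ^2*k^2) := by
    calc |b| ≤ 2*k*θ^2 + 2*(θ*k)^2 := hB
      _ = 2*k*θ^2 + 2*(θ^2*k^2) := by ring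
  have hZ : ‖((a:ℝ):ℂ) + ((b:ℝ):ℂ) * Complex.I‖ ≤ 4 * θ^2 * (1 + k^2) := by
    have h2k : 2*k*θ^2 ≤ θ^2 + θ^2*k^2 := by nlinarith [sq_nonneg (θ*(k-1))]
    have hsum : |a| + |b| ≤ 4 * θ^2 * (1 + k^2) := by nlinarith [hA, hB', h2k]
    linarith [hnorm2]
  have hfin : 1 / (2 * s * c) * (4 * θ^2 * (1 + k^2)) ≤ 10 * s * (1 + k^2) := by
    rw [div_mul_eq_mul_div, one_mul, div_le_iff₀ (by positivity)]
    nlinarith [mul_le_mul_of_nonneg_right hθs (by positivity : (0:ℝ) ≤ 1+k^2),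
      mul_nonneg (mul_nonneg (by linarith : (0:ℝ) ≤ c - 1/2) (sq_nonneg s))
        (by positivity : (0:ℝ) ≤ 1+k^2)]
  rw [hid, norm_mul, hnorm1]
  calc 1 / (2*s*c) * ‖((a:ℝ):ℂ) + ((b:ℝ):ℂ) * Complex.I‖
      ≤ 1 / (2*s*c) * (4 * θ^2 * (1 + k^2)) := mul_le_mul_of_nonneg_left hZ (by positivity)
    _ ≤ 10 * s * (1 + k^2) := hfin

lemma int_cast_complex (j : ℤ) : ((j : ℤ) : ℂ) = (((j : ℝ)) : ℂ) := by norm_cast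

lemma norm_int_abs_cast (n m : ℤ) : ‖((|n - m| : ℤ) : ℂ)‖ = ((|n - m| : ℤ) : ℝ) := by
  rw [int_cast_complex, Complex.norm_real, Real.norm_eq_abs,
    _root_.abs_of_nonneg (by positivity : (0:ℝ) ≤ ((|n-m|:ℤ) : ℝ))]

lemma int_abs_sq_bound (n m : ℤ) :
    1 + ((|n - m| : ℤ) : ℝ)^2 ≤ 2 * ((1+(n:ℝ)^2) * (1+(m:ℝ)^2)) := by
  push_cast
  rw [_root_.sq_abs]
  nlinarith [sq_nonneg ((n:ℝ)+(m:ℝ)), sq_nonneg ((n:ℝ)*(m:ℝ)), sq_nonneg ((n:ℝ)-(m:ℝ)),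
    sq_nonneg ((n:ℝ)*(m:ℝ) - 1), sq_nonneg ((n:ℝ)*(m:ℝ) + 1)]

/-- Puiseux expansion of the free resolvent at `ω = 0`.
Fix `σ > 5/2`.  With `θ₊(ω) ∈ (-π,0)` the root of `2 - 2cos θ = ω`, there exist `C > 0`
and `ω₀ > 0` so that `‖R₀⁺(ω) - iR₋₁/√ω - R₀‖_{B(σ,-σ)} ≤ C√ω` for `0 < ω < ω₀`, where
`(R₋₁ f)_n = (1/2)∑_m f_m` and `(R₀ f)_n = -(1/2)∑_m |n-m| f_m`.  Moreover `R₋₁` and `R₀`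
are Hilbert–Schmidt from `l²_{σ'}` to `l²_{-σ'}` for every `σ' > 3/2`. -/
theorem statement14 (σ : ℝ) (hσ : 5 / 2 < σ) (θ : ℝ → ℝ)
    (hθ : ∀ ω ∈ Set.Ioo (0 : ℝ) 4,
      θ ω ∈ Set.Ioo (-Real.pi) 0 ∧ 2 - 2 * Real.cos (θ ω) = ω) :
    (∃ C : ℝ, 0 < C ∧ ∃ ω₀ : ℝ, 0 < ω₀ ∧ ω₀ ≤ 4 ∧
      ∀ ω : ℝ, 0 < ω → ω < ω₀ → ∀ f : ℤ → ℂ,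
        wnorm2 (-σ) (fun n =>
            (-(Complex.I / (2 * (Real.sin (θ ω) : ℂ))) *
              ∑' m : ℤ, Complex.exp (-Complex.I * ((θ ω : ℝ) : ℂ) * ((|n - m| : ℤ) : ℂ)) * f m)
            - (Complex.I / ((Real.sqrt ω : ℝ) : ℂ)) * ((1 / 2 : ℂ) * ∑' m : ℤ, f m)
            - (-(1 / 2 : ℂ) * ∑' m : ℤ, ((|n - m| : ℤ) : ℂ) * f m)) ≤
          ENNReal.ofReal (C * Real.sqrt ω) * wnorm2 σ f) ∧
    (∀ σ' : ℝ, 3 / 2 < σ' →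
      (∑' n : ℤ, ∑' m : ℤ, wt (-σ') n * wt (-σ') m *
        (‖(1 / 2 : ℂ)‖₊ : ℝ≥0∞) ^ 2) < ⊤ ∧
      (∑' n : ℤ, ∑' m : ℤ, wt (-σ') n * wt (-σ') m *
        (‖-(1 / 2 : ℂ) * ((|n - m| : ℤ) : ℂ)‖₊ : ℝ≥0∞) ^ 2) < ⊤) := by
  constructor
  · -- Part 1
    have hq : (2 - σ : ℝ) < -(1/2) := by linarith
    set K : ℝ := ∑' n : ℤ, (1 + (n:ℝ)^2) ^ (2-σ : ℝ) with hK_def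
    have hsumK : Summable (fun n : ℤ => (1 + (n:ℝ)^2) ^ (2-σ:ℝ)) := summable_weight hq
    have hK1 : (1:ℝ) ≤ K := by
      have h := Summable.le_tsum hsumK 0 (fun j _ => by positivity)
      simpa using h
    have hKpos : (0:ℝ) < K := by linarith
    have hS : ∑' n : ℤ, wt (2-σ) n = ENNReal.ofReal K := tsum_wt_eq hq
    refine ⟨20*K + 1, by positivity, 1, one_pos, by norm_num, ?_⟩
    intro ω hω0 hω1 f
    obtain ⟨⟨hθ1, hθ2⟩, hθeq⟩ := hθ ω ⟨hω0, by linarith⟩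
    have hspos : 0 < Real.sqrt ω := Real.sqrt_pos.mpr hω0
    by_cases hW : wnorm2 σ f = ⊤
    · rw [hW, ENNReal.mul_top (ENNReal.ofReal_pos.mpr (by positivity)).ne']
      exact le_top
    have hθ3 : -(Real.pi/3) < θ ω := by
      by_contra hcon
      push_neg at hcon
      have hcos : Real.cos (θ ω) ≤ 1/2 := by
        rw [← Real.cos_neg, ← Real.cos_pi_div_three]
        exact Real.cos_le_cos_of_nonneg_of_le_pi (by positivity) (by linarith) (by linarith)
      linarith
    have hsinhalf : Real.sin (θ ω / 2) < 0 :=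
      Real.sin_neg_of_neg_of_neg_pi_lt (by linarith) (by nlinarith [Real.pi_pos])
    have hs_eq : Real.sqrt ω = -(2 * Real.sin (θ ω / 2)) := by
      have hhalf := Real.sin_sq_eq_half_sub (θ ω / 2)
      rw [show 2*(θ ω/2) = θ ω by ring] at hhalf
      have hω_eq : ω = (-(2 * Real.sin (θ ω/2)))^2 := by nlinarith
      calc Real.sqrt ω = Real.sqrt ((-(2 * Real.sin (θ ω/2)))^2) := by rw [← hω_eq]
        _ = -(2 * Real.sin (θ ω/2)) := Real.sqrt_sq (by linarith)
    -- weighted l¹ data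
    set F : ℤ → ℝ := fun m => (1 + (m:ℝ)^2) * ‖f m‖ with hF_def
    have hFnn : ∀ m, 0 ≤ F m := fun m => by rw [hF_def]; positivity
    have hFc : ∀ m : ℤ, ENNReal.ofReal (F m) = ENNReal.ofReal (1+(m:ℝ)^2) * (‖f m‖₊ : ℝ≥0∞) := by
      intro m
      rw [hF_def, ENNReal.ofReal_mul (by positivity), ofReal_norm_eq_enorm, enorm_eq_nnnorm]
    have hM_le : ∑' m : ℤ, ENNReal.ofReal (1+(m:ℝ)^2) * (‖f m‖₊:ℝ≥0∞)
        ≤ (ENNReal.ofReal K)^(1/2:ℝ) * wnorm2 σ f := by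
      rw [← hS]; exact weighted_l1_le σ f
    have hRHS_ne : (ENNReal.ofReal K)^(1/2:ℝ) * wnorm2 σ f ≠ ⊤ :=
      ENNReal.mul_ne_top (ENNReal.rpow_ne_top_of_nonneg (by norm_num) ENNReal.ofReal_ne_top) hW
    have hM_ne : (∑' m : ℤ, ENNReal.ofReal (1+(m:ℝ)^2) * (‖f m‖₊:ℝ≥0∞)) ≠ ⊤ :=
      ne_top_of_le_ne_top hRHS_ne hM_le
    have hsumF : Summable F := by
      have h1 : (∑' m : ℤ, (((F m).toNNReal : ℝ≥0) : ℝ≥0∞)) ≠ ⊤ := by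
        have heq : ∀ m : ℤ, (((F m).toNNReal : ℝ≥0) : ℝ≥0∞)
            = ENNReal.ofReal (1+(m:ℝ)^2) * (‖f m‖₊:ℝ≥0∞) := fun m => hFc m
        rw [tsum_congr heq]; exact hM_ne
      have h2 := ENNReal.tsum_coe_ne_top_iff_summable.mp h1
      exact (NNReal.summable_coe.mpr h2).congr fun m => Real.coe_toNNReal _ (hFnn m)
    set MF : ℝ := ∑' m : ℤ, F m with hMF_def
    have hMFnn : 0 ≤ MF := tsum_nonneg hFnn
    have hMF_eq : ∑' m : ℤ, ENNReal.ofReal (1+(m:ℝ)^2) * (‖f m‖₊:ℝ≥0∞)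
        = ENNReal.ofReal MF := by
      rw [hMF_def, ENNReal.ofReal_tsum_of_nonneg hFnn hsumF]
      exact (tsum_congr hFc).symm
    -- summability of the three series
    have hf_le_F : ∀ m : ℤ, ‖f m‖ ≤ F m := by
      intro m
      show ‖f m‖ ≤ (1 + (m:ℝ)^2) * ‖f m‖
      nlinarith [norm_nonneg (f m), sq_nonneg ((m:ℝ))]
    have hsum_f : Summable f :=
      Summable.of_norm (hsumF.of_nonneg_of_le (fun m => norm_nonneg _) hf_le_F)
    have hsum_exp : ∀ n : ℤ, Summable (fun m : ℤ =>
        Complex.exp (-Complex.I * ((θ ω : ℝ):ℂ) * ((|n - m| : ℤ):ℂ)) * f m) := by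
      intro n
      apply Summable.of_norm
      apply hsumF.of_nonneg_of_le (fun m => norm_nonneg _)
      intro m
      rw [norm_mul]
      have he : ‖Complex.exp (-Complex.I * ((θ ω : ℝ):ℂ) * ((|n - m| : ℤ):ℂ))‖ = 1 := by
        rw [show -Complex.I * ((θ ω : ℝ):ℂ) * ((|n - m| : ℤ):ℂ)
            = ((-(θ ω * ((|n-m| : ℤ):ℝ)) : ℝ) : ℂ) * Complex.I by
          rw [int_cast_complex]; push_cast; ring]
        exact Complex.norm_exp_ofReal_mul_I _
      rw [he, one_mul]; exact hf_le_F m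
    have habs_le : ∀ n m : ℤ, ‖((|n - m| : ℤ):ℂ) * f m‖ ≤ (2*(1+(n:ℝ)^2)) * F m := by
      intro n m
      rw [norm_mul, norm_int_abs_cast]
      show ((|n-m|:ℤ):ℝ) * ‖f m‖ ≤ 2*(1+(n:ℝ)^2) * ((1 + (m:ℝ)^2) * ‖f m‖)
      have h2 : ((|n-m|:ℤ):ℝ) ≤ 2*(1+(n:ℝ)^2)*(1+(m:ℝ)^2) := by
        have hb := int_abs_sq_bound n m
        nlinarith [sq_nonneg (((|n-m|:ℤ):ℝ) - 1), sq_nonneg ((n:ℝ)), sq_nonneg ((m:ℝ))]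
      calc ((|n-m|:ℤ):ℝ) * ‖f m‖ ≤ (2*(1+(n:ℝ)^2)*(1+(m:ℝ)^2)) * ‖f m‖ :=
            mul_le_mul_of_nonneg_right h2 (norm_nonneg _)
        _ = 2*(1+(n:ℝ)^2) * ((1+(m:ℝ)^2) * ‖f m‖) := by ring
    have hsum_abs : ∀ n : ℤ, Summable (fun m : ℤ => ((|n - m| : ℤ):ℂ) * f m) := by
      intro n
      apply Summable.of_norm
      exact Summable.of_nonneg_of_le (fun m => norm_nonneg _) (habs_le n) (hsumF.mul_left _)
    -- the kernel bound
    have hG_bound : ∀ n m : ℤ,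
        ‖-(Complex.I / (2 * (Real.sin (θ ω) : ℂ))) *
            Complex.exp (-Complex.I * ((θ ω : ℝ):ℂ) * ((|n - m| : ℤ):ℂ))
          - Complex.I / (2 * ((Real.sqrt ω : ℝ):ℂ)) + ((|n - m| : ℤ):ℂ)/2‖
          ≤ 20 * Real.sqrt ω * ((1+(n:ℝ)^2) * (1+(m:ℝ)^2)) := by
      intro n m
      have hk : (0:ℝ) ≤ ((|n - m| : ℤ) : ℝ) := by positivity
      have hkey := key_est hθ3 hθ2 (k := ((|n - m| : ℤ) : ℝ)) hk
      rw [← hs_eq] at hkey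
      have hc1 : ((((|n - m| : ℤ) : ℝ)) : ℂ) = ((|n - m| : ℤ) : ℂ) := (int_cast_complex _).symm
      rw [hc1] at hkey
      refine hkey.trans ?_
      have hb := int_abs_sq_bound n m
      nlinarith [hspos]
    have hGf_le : ∀ n m : ℤ,
        ‖(-(Complex.I / (2 * (Real.sin (θ ω) : ℂ))) *
            Complex.exp (-Complex.I * ((θ ω : ℝ):ℂ) * ((|n - m| : ℤ):ℂ))
          - Complex.I / (2 * ((Real.sqrt ω : ℝ):ℂ)) + ((|n - m| : ℤ):ℂ)/2) * f m‖
          ≤ (20 * Real.sqrt ω * (1+(n:ℝ)^2)) * F m := by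
      intro n m
      rw [norm_mul]
      show _ ≤ (20 * Real.sqrt ω * (1+(n:ℝ)^2)) * ((1 + (m:ℝ)^2) * ‖f m‖)
      calc ‖_‖ * ‖f m‖ ≤ (20 * Real.sqrt ω * ((1+(n:ℝ)^2) * (1+(m:ℝ)^2))) * ‖f m‖ :=
            mul_le_mul_of_nonneg_right (hG_bound n m) (norm_nonneg _)
        _ = (20 * Real.sqrt ω * (1+(n:ℝ)^2)) * ((1+(m:ℝ)^2) * ‖f m‖) := by ring
    have hsum_G : ∀ n : ℤ, Summable (fun m : ℤ =>
        (-(Complex.I / (2 * (Real.sin (θ ω) : ℂ))) *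
            Complex.exp (-Complex.I * ((θ ω : ℝ):ℂ) * ((|n - m| : ℤ):ℂ))
          - Complex.I / (2 * ((Real.sqrt ω : ℝ):ℂ)) + ((|n - m| : ℤ):ℂ)/2) * f m) := by
      intro n
      have heq : (fun m : ℤ =>
          (-(Complex.I / (2 * (Real.sin (θ ω) : ℂ))) *
              Complex.exp (-Complex.I * ((θ ω : ℝ):ℂ) * ((|n - m| : ℤ):ℂ))
            - Complex.I / (2 * ((Real.sqrt ω : ℝ):ℂ)) + ((|n - m| : ℤ):ℂ)/2) * f m)
          = fun m : ℤ =>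
            (-(Complex.I / (2 * (Real.sin (θ ω) : ℂ)))) *
              (Complex.exp (-Complex.I * ((θ ω : ℝ):ℂ) * ((|n - m| : ℤ):ℂ)) * f m)
            - (Complex.I / (2 * ((Real.sqrt ω : ℝ):ℂ))) * f m
            + (1/2 : ℂ) * (((|n - m| : ℤ):ℂ) * f m) := by
        funext m; ring
      rw [heq]
      exact (((hsum_exp n).mul_left _).sub (hsum_f.mul_left _)).add ((hsum_abs n).mul_left _)
    have hsum_Gn : ∀ n : ℤ, Summable (fun m : ℤ =>
        ‖(-(Complex.I / (2 * (Real.sin (θ ω) : ℂ))) *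
            Complex.exp (-Complex.I * ((θ ω : ℝ):ℂ) * ((|n - m| : ℤ):ℂ))
          - Complex.I / (2 * ((Real.sqrt ω : ℝ):ℂ)) + ((|n - m| : ℤ):ℂ)/2) * f m‖) := by
      intro n
      exact Summable.of_nonneg_of_le (fun m => norm_nonneg _) (hGf_le n) (hsumF.mul_left _)
    -- the pointwise bound on the full expression
    have hbnd : ∀ n : ℤ,
        ‖(-(Complex.I / (2 * (Real.sin (θ ω) : ℂ))) *
              ∑' m : ℤ, Complex.exp (-Complex.I * ((θ ω : ℝ) : ℂ) * ((|n - m| : ℤ) : ℂ)) * f m)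
            - (Complex.I / ((Real.sqrt ω : ℝ) : ℂ)) * ((1 / 2 : ℂ) * ∑' m : ℤ, f m)
            - (-(1 / 2 : ℂ) * ∑' m : ℤ, ((|n - m| : ℤ) : ℂ) * f m)‖
          ≤ (20 * Real.sqrt ω * MF) * (1 + (n:ℝ)^2) := by
      intro n
      have hrepr : (-(Complex.I / (2 * (Real.sin (θ ω) : ℂ))) *
              ∑' m : ℤ, Complex.exp (-Complex.I * ((θ ω : ℝ) : ℂ) * ((|n - m| : ℤ) : ℂ)) * f m)
            - (Complex.I / ((Real.sqrt ω : ℝ) : ℂ)) * ((1 / 2 : ℂ) * ∑' m : ℤ, f m)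
            - (-(1 / 2 : ℂ) * ∑' m : ℤ, ((|n - m| : ℤ) : ℂ) * f m)
          = ∑' m : ℤ, (-(Complex.I / (2 * (Real.sin (θ ω) : ℂ))) *
              Complex.exp (-Complex.I * ((θ ω : ℝ):ℂ) * ((|n - m| : ℤ):ℂ))
            - Complex.I / (2 * ((Real.sqrt ω : ℝ):ℂ)) + ((|n - m| : ℤ):ℂ)/2) * f m := by
        rw [show (Complex.I / ((Real.sqrt ω : ℝ) : ℂ)) * ((1 / 2 : ℂ) * ∑' m : ℤ, f m)
            = (Complex.I / (2 * ((Real.sqrt ω : ℝ) : ℂ))) * ∑' m : ℤ, f m from by ring]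
        rw [← tsum_mul_left (a := -(Complex.I / (2 * (Real.sin (θ ω) : ℂ)))),
          ← tsum_mul_left (a := Complex.I / (2 * ((Real.sqrt ω : ℝ) : ℂ))),
          ← tsum_mul_left (a := -(1/2 : ℂ))]
        rw [← Summable.tsum_sub ((hsum_exp n).mul_left _) (hsum_f.mul_left _),
          ← Summable.tsum_sub (((hsum_exp n).mul_left _).sub (hsum_f.mul_left _))
            ((hsum_abs n).mul_left _)]
        exact tsum_congr fun m => by ring
      rw [hrepr]
      calc ‖∑' m : ℤ, (-(Complex.I / (2 * (Real.sin (θ ω) : ℂ))) *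
              Complex.exp (-Complex.I * ((θ ω : ℝ):ℂ) * ((|n - m| : ℤ):ℂ))
            - Complex.I / (2 * ((Real.sqrt ω : ℝ):ℂ)) + ((|n - m| : ℤ):ℂ)/2) * f m‖
          ≤ ∑' m : ℤ, ‖(-(Complex.I / (2 * (Real.sin (θ ω) : ℂ))) *
              Complex.exp (-Complex.I * ((θ ω : ℝ):ℂ) * ((|n - m| : ℤ):ℂ))
            - Complex.I / (2 * ((Real.sqrt ω : ℝ):ℂ)) + ((|n - m| : ℤ):ℂ)/2) * f m‖ :=
            norm_tsum_le_tsum_norm (hsum_Gn n)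
        _ ≤ ∑' m : ℤ, (20 * Real.sqrt ω * (1+(n:ℝ)^2)) * F m :=
            Summable.tsum_le_tsum (hGf_le n) (hsum_Gn n) (hsumF.mul_left _)
        _ = (20 * Real.sqrt ω * (1+(n:ℝ)^2)) * MF := by rw [tsum_mul_left, hMF_def]
        _ = (20 * Real.sqrt ω * MF) * (1 + (n:ℝ)^2) := by ring
    have hmain := wnorm2_le_of_bound σ _ (20 * Real.sqrt ω * MF) hbnd
    rw [hS] at hmain
    refine hmain.trans ?_
    have hXne : (ENNReal.ofReal K) ≠ 0 := (ENNReal.ofReal_pos.mpr hKpos).ne'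
    have hhalf : (ENNReal.ofReal K)^(1/2:ℝ) * (ENNReal.ofReal K)^(1/2:ℝ) = ENNReal.ofReal K := by
      rw [← ENNReal.rpow_add _ _ hXne ENNReal.ofReal_ne_top]
      norm_num
    have hMF_le : ENNReal.ofReal MF ≤ (ENNReal.ofReal K)^(1/2:ℝ) * wnorm2 σ f :=
      hMF_eq ▸ hM_le
    calc ENNReal.ofReal (20 * Real.sqrt ω * MF) * (ENNReal.ofReal K) ^ (1/2:ℝ)
        = ENNReal.ofReal (20 * Real.sqrt ω) * ENNReal.ofReal MF
            * (ENNReal.ofReal K) ^ (1/2:ℝ) := by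
          rw [← ENNReal.ofReal_mul (by positivity)]
      _ ≤ ENNReal.ofReal (20 * Real.sqrt ω) * ((ENNReal.ofReal K)^(1/2:ℝ) * wnorm2 σ f)
            * (ENNReal.ofReal K) ^ (1/2:ℝ) := by gcongr
      _ = ENNReal.ofReal (20 * Real.sqrt ω)
            * ((ENNReal.ofReal K)^(1/2:ℝ) * (ENNReal.ofReal K)^(1/2:ℝ)) * wnorm2 σ f := by
          ring
      _ = ENNReal.ofReal (20 * Real.sqrt ω) * ENNReal.ofReal K * wnorm2 σ f := by rw [hhalf]
      _ ≤ ENNReal.ofReal ((20*K + 1) * Real.sqrt ω) * wnorm2 σ f := by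
          gcongr
          rw [← ENNReal.ofReal_mul (by positivity)]
          exact ENNReal.ofReal_le_ofReal (by nlinarith)
  · -- Part 2
    intro σ' hσ'
    constructor
    · have hT : ∑' n : ℤ, wt (-σ') n ≠ ⊤ := by
        rw [tsum_wt_eq (by linarith : (-σ' : ℝ) < -(1/2))]
        exact ENNReal.ofReal_ne_top
      simp_rw [mul_assoc, ENNReal.tsum_mul_left, ENNReal.tsum_mul_right]
      exact ENNReal.mul_lt_top (lt_top_iff_ne_top.mpr hT)
        (ENNReal.mul_lt_top (lt_top_iff_ne_top.mpr hT)
          (ENNReal.pow_lt_top ENNReal.coe_lt_top))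
    · have hT1 : ∑' n : ℤ, wt (1-σ') n ≠ ⊤ := by
        rw [show (1-σ' : ℝ) = -(σ'-1) by ring,
          tsum_wt_eq (by linarith : (-(σ'-1) : ℝ) < -(1/2))]
        exact ENNReal.ofReal_ne_top
      have hle : ∀ n m : ℤ, wt (-σ') n * wt (-σ') m *
          (‖-(1/2:ℂ) * ((|n-m|:ℤ):ℂ)‖₊:ℝ≥0∞)^2 ≤ wt (1-σ') n * wt (1-σ') m := by
        intro n m
        have h1 : ((‖-(1/2:ℂ) * ((|n-m|:ℤ):ℂ)‖₊:ℝ≥0∞))^2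
            ≤ ENNReal.ofReal ((1+(n:ℝ)^2)*(1+(m:ℝ)^2)) := by
          rw [← enorm_eq_nnnorm, ← ofReal_norm_eq_enorm, ← ENNReal.ofReal_pow (norm_nonneg _)]
          apply ENNReal.ofReal_le_ofReal
          rw [norm_mul, norm_neg, norm_int_abs_cast]
          have hn : ‖(1/2 : ℂ)‖ = 1/2 := by
            rw [show (1/2 : ℂ) = ((1/2 : ℝ) : ℂ) by push_cast; ring, Complex.norm_real,
              Real.norm_eq_abs, _root_.abs_of_pos (by norm_num)]
          rw [hn]
          have hb := int_abs_sq_bound n m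
          nlinarith [sq_nonneg ((|n-m|:ℤ):ℝ)]
        calc wt (-σ') n * wt (-σ') m * (‖-(1/2:ℂ) * ((|n-m|:ℤ):ℂ)‖₊:ℝ≥0∞)^2
            ≤ wt (-σ') n * wt (-σ') m * ENNReal.ofReal ((1+(n:ℝ)^2)*(1+(m:ℝ)^2)) := by gcongr
          _ = (wt (-σ') n * ENNReal.ofReal (1+(n:ℝ)^2))
              * (wt (-σ') m * ENNReal.ofReal (1+(m:ℝ)^2)) := by
              rw [ENNReal.ofReal_mul (by positivity)]; ring
          _ = wt (1-σ') n * wt (1-σ') m := by rw [wt_mul_one, wt_mul_one]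
      calc ∑' n : ℤ, ∑' m : ℤ, wt (-σ') n * wt (-σ') m *
            (‖-(1/2:ℂ) * ((|n-m|:ℤ):ℂ)‖₊:ℝ≥0∞)^2
          ≤ ∑' n : ℤ, ∑' m : ℤ, wt (1-σ') n * wt (1-σ') m :=
            ENNReal.tsum_le_tsum fun n => ENNReal.tsum_le_tsum fun m => hle n m
        _ = (∑' n : ℤ, wt (1-σ') n) * (∑' m : ℤ, wt (1-σ') m) := by
            simp_rw [ENNReal.tsum_mul_left, ENNReal.tsum_mul_right]
        _ < ⊤ := ENNReal.mul_lt_top (lt_top_iff_ne_top.mpr hT1) (lt_top_iff_ne_top.mpr hT1)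
end
end

section
/- Fix ω ∈ (0,4) with θ = θ₊(ω) ∈ (-π,0) the root of 2 - 2cos θ = ω, fix σ > 1/2, and let V be a real-valued potential with sup_{n∈ℤ} (1+n²)^σ |V_n| < ∞. If f ∈ l²_σ(ℤ) satisfies f_n - (i V_n / (2 sin θ)) ∑_{m∈ℤ} e^{-iθ|n-m|} f_m = 0 for all n ∈ ℤ, then ∑_{m∈ℤ} cos(θ m) f_m = 0 and ∑_{m∈ℤ} sin(θ m) f_m = 0. -/
open scoped ENNReal NNReal BigOperators
open Complex Filter Topology

noncomputable section

lemma aux_summable_weight {σ : ℝ} (hσ : 1 / 2 < σ) :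
    Summable (fun n : ℤ => (1 + (n : ℝ) ^ 2) ^ (-σ)) := by
  have h2σ : (1 : ℝ) < 2 * σ := by linarith
  have hg : Summable (fun n : ℤ => |(n : ℝ)| ^ (-(2 * σ))) := Real.summable_abs_int_rpow h2σ
  have hind : Summable (fun n : ℤ => if n = 0 then (1 : ℝ) else 0) := by
    apply summable_of_ne_finset_zero (s := {0})
    intro n hn
    simp only [Finset.mem_singleton] at hn
    simp [hn]
  refine Summable.of_nonneg_of_le (fun n => by positivity) (fun n => ?_) (hg.add hind)
  rcases eq_or_ne n 0 with rfl | hn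
  · simp [Real.zero_rpow (by linarith : -(2 * σ) ≠ 0), Real.one_rpow]
  · have hn' : ((n : ℝ)) ≠ 0 := Int.cast_ne_zero.2 hn
    have h1 : |((n : ℝ))| ^ (-(2 * σ)) = ((n : ℝ) ^ 2) ^ (-σ) := by
      rw [show -(2 * σ) = 2 * (-σ) by ring, Real.rpow_mul (abs_nonneg _),
        show ((2 : ℝ)) = ((2 : ℕ) : ℝ) by norm_num, Real.rpow_natCast, _root_.sq_abs]
    have h2 : (1 + (n : ℝ) ^ 2) ^ (-σ) ≤ ((n : ℝ) ^ 2) ^ (-σ) := by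
      apply Real.rpow_le_rpow_of_nonpos (by positivity) (by nlinarith) (by linarith)
    simp only [hn, if_false, add_zero]
    rw [h1]; exact h2

lemma summable_norm_of_wnorm2 {σ : ℝ} (hσ : 1 / 2 < σ) {f : ℤ → ℂ}
    (hf : wnorm2 σ f < ⊤) :
    Summable (fun n : ℤ => ‖f n‖) := by
  rw [wnorm2] at hf
  have hσ0 : (0 : ℝ) ≤ σ := by linarith
  have hwpos : ∀ n : ℤ, (0 : ℝ) < 1 + (n : ℝ) ^ 2 := fun n => by positivity
  have hw0 : ∀ n : ℤ, wt σ n ≠ 0 := fun n =>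
    (ENNReal.rpow_pos (ENNReal.ofReal_pos.2 (hwpos n)) ENNReal.ofReal_ne_top).ne'
  have hwT : ∀ n : ℤ, wt σ n ≠ ⊤ := fun n =>
    ENNReal.rpow_ne_top_of_nonneg hσ0 ENNReal.ofReal_ne_top
  have hX : ∑' n : ℤ, wt σ n * (‖f n‖₊ : ℝ≥0∞) ^ 2 ≠ ⊤ := by
    intro h
    rw [h, ENNReal.top_rpow_of_pos (by norm_num)] at hf
    exact (lt_irrefl _ hf)
  have hinveq : ∀ n : ℤ, (wt σ n)⁻¹ = ENNReal.ofReal ((1 + (n : ℝ) ^ 2) ^ (-σ)) := by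
    intro n
    rw [wt, ENNReal.ofReal_rpow_of_pos (hwpos n), Real.rpow_neg (hwpos n).le,
      ENNReal.ofReal_inv_of_pos (Real.rpow_pos_of_pos (hwpos n) σ)]
  have hinv : ∑' n : ℤ, (wt σ n)⁻¹ ≠ ⊤ := by
    rw [tsum_congr hinveq, ← ENNReal.ofReal_tsum_of_nonneg (fun n => by positivity)
      (aux_summable_weight hσ)]
    exact ENNReal.ofReal_ne_top
  have key : ∀ n : ℤ, (‖f n‖₊ : ℝ≥0∞) ≤ (wt σ n)⁻¹ + wt σ n * (‖f n‖₊ : ℝ≥0∞) ^ 2 := by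
    intro n
    set a : ℝ≥0∞ := (wt σ n)⁻¹ ^ (1 / 2 : ℝ) with ha
    set b : ℝ≥0∞ := wt σ n ^ (1 / 2 : ℝ) * (‖f n‖₊ : ℝ≥0∞) with hb
    have hwh0 : wt σ n ^ (1 / 2 : ℝ) ≠ 0 :=
      (ENNReal.rpow_pos (pos_iff_ne_zero.2 (hw0 n)) (hwT n)).ne'
    have hwhT : wt σ n ^ (1 / 2 : ℝ) ≠ ⊤ :=
      ENNReal.rpow_ne_top_of_nonneg (by norm_num) (hwT n)
    have hab : a * b = (‖f n‖₊ : ℝ≥0∞) := by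
      rw [ha, hb, ENNReal.inv_rpow, ← mul_assoc,
        ENNReal.inv_mul_cancel hwh0 hwhT, one_mul]
    have haa : a * a = (wt σ n)⁻¹ := by
      rw [ha, ← ENNReal.rpow_add _ _ (ENNReal.inv_ne_zero.2 (hwT n))
        (ENNReal.inv_ne_top.2 (hw0 n))]
      norm_num
    have hbb : b * b = wt σ n * (‖f n‖₊ : ℝ≥0∞) ^ 2 := by
      rw [hb, mul_mul_mul_comm, ← ENNReal.rpow_add _ _ (hw0 n) (hwT n), sq]
      norm_num
    have hmax : a * b ≤ a * a + b * b := by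
      rcases le_total a b with h | h
      · calc a * b ≤ b * b := mul_le_mul' h le_rfl
          _ ≤ a * a + b * b := le_add_self
      · calc a * b ≤ a * a := mul_le_mul' le_rfl h
          _ ≤ a * a + b * b := le_self_add
    calc (‖f n‖₊ : ℝ≥0∞) = a * b := hab.symm
      _ ≤ a * a + b * b := hmax
      _ = (wt σ n)⁻¹ + wt σ n * (‖f n‖₊ : ℝ≥0∞) ^ 2 := by rw [haa, hbb]
  have hfin : ∑' n : ℤ, (‖f n‖₊ : ℝ≥0∞) ≠ ⊤ := by
    apply ne_top_of_le_ne_top _ (ENNReal.tsum_le_tsum key)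
    rw [ENNReal.tsum_add]
    exact ENNReal.add_ne_top.2 ⟨hinv, hX⟩
  have h1 : Summable (fun n : ℤ => ‖f n‖₊) := ENNReal.tsum_coe_ne_top_iff_summable.1 hfin
  simpa [coe_nnnorm] using NNReal.summable_coe.2 h1


set_option maxHeartbeats 2000000

/-- Eigenvectors of `I + V R₀⁺(ω)` satisfy two orthogonality
constraints.  Fix `ω ∈ (0,4)` with `θ = θ₊(ω) ∈ (-π,0)` the root of `2 - 2cos θ = ω`,
fix `σ > 1/2` and let `V` be real-valued with `sup_n (1+n²)^σ |V_n| < ∞`.  If `f ∈ l²_σ`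
satisfies `f_n - (i V_n/(2 sin θ)) ∑_m e^{-iθ|n-m|} f_m = 0` for all `n`, then
`∑_m cos(θm) f_m = 0` and `∑_m sin(θm) f_m = 0`. -/
theorem statement16 (ω : ℝ) (hω : ω ∈ Set.Ioo (0 : ℝ) 4)
    (θ : ℝ) (hθ : θ ∈ Set.Ioo (-Real.pi) 0) (hθeq : 2 - 2 * Real.cos θ = ω)
    (σ : ℝ) (hσ : 1 / 2 < σ) (V : ℤ → ℝ)
    (hV : ∃ A : ℝ, ∀ n : ℤ, (1 + (n : ℝ) ^ 2) ^ σ * |V n| ≤ A)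
    (f : ℤ → ℂ) (hf : wnorm2 σ f < ⊤)
    (heig : ∀ n : ℤ, f n - Complex.I * (V n : ℂ) / (2 * (Real.sin θ : ℂ)) *
      ∑' m : ℤ, Complex.exp (-Complex.I * (θ : ℂ) * ((|n - m| : ℤ) : ℂ)) * f m = 0) :
    (∑' m : ℤ, (Real.cos (θ * m) : ℂ) * f m) = 0 ∧
    (∑' m : ℤ, (Real.sin (θ * m) : ℂ) * f m) = 0 := by
  classical
  have hs : Summable (fun n : ℤ => ‖f n‖) := summable_norm_of_wnorm2 hσ hf
  set K : ℤ → ℤ → ℂ :=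
    fun n m => Complex.exp (-Complex.I * (θ : ℂ) * ((|n - m| : ℤ) : ℂ)) with hKdef
  have hKnorm : ∀ n m : ℤ, ‖K n m‖ = 1 := by
    intro n m
    have h1 : -Complex.I * (θ : ℂ) * ((|n - m| : ℤ) : ℂ)
        = ((-(θ * ((|n - m| : ℤ) : ℝ)) : ℝ) : ℂ) * Complex.I := by
      rw [Complex.ofReal_neg, Complex.ofReal_mul, Complex.ofReal_intCast]; ring
    simp only [hKdef]
    rw [h1]
    exact Complex.norm_exp_ofReal_mul_I _
  -- kernel expansion
  have hKexp : ∀ n m : ℤ, K n m =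
      ((Real.cos (θ * n) * Real.cos (θ * m) + Real.sin (θ * n) * Real.sin (θ * m) : ℝ) : ℂ)
      - Complex.I * ((Real.sin (θ * ((|n - m| : ℤ) : ℝ)) : ℝ) : ℂ) := by
    intro n m
    have h1 : -Complex.I * (θ : ℂ) * ((|n - m| : ℤ) : ℂ)
        = ((-(θ * ((|n - m| : ℤ) : ℝ)) : ℝ) : ℂ) * Complex.I := by
      rw [Complex.ofReal_neg, Complex.ofReal_mul, Complex.ofReal_intCast]; ring
    have hcos : Real.cos (θ * ((|n - m| : ℤ) : ℝ))
        = Real.cos (θ * n) * Real.cos (θ * m) + Real.sin (θ * n) * Real.sin (θ * m) := by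
      have h2 : Real.cos (θ * ((|n - m| : ℤ) : ℝ)) = Real.cos (θ * n - θ * m) := by
        rcases le_total m n with h | h
        · rw [abs_of_nonneg (sub_nonneg.2 h)]
          congr 1; push_cast; ring
        · rw [abs_of_nonpos (sub_nonpos.2 h), ← Real.cos_neg (θ * n - θ * m)]
          congr 1; push_cast; ring
      rw [h2, Real.cos_sub]
    simp only [hKdef]
    rw [h1, Complex.exp_mul_I, ← Complex.ofReal_cos, ← Complex.ofReal_sin,
      Real.cos_neg, Real.sin_neg, hcos]
    push_cast
    ring
  set g : ℤ → ℂ := fun n => ∑' m : ℤ, K n m * f m with hgdef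
  have hfn : ∀ n, f n = Complex.I * (V n : ℂ) / (2 * (Real.sin θ : ℂ)) * g n := by
    intro n
    have := heig n
    rw [sub_eq_zero] at this
    exact this
  have hKfs : ∀ n, Summable (fun m => ‖K n m * f m‖) := by
    intro n
    apply hs.congr
    intro m
    rw [norm_mul, hKnorm, one_mul]
  have hgnorm : ∀ n, ‖g n‖ ≤ ∑' m, ‖f m‖ := by
    intro n
    calc ‖g n‖ ≤ ∑' m, ‖K n m * f m‖ := norm_tsum_le_tsum_norm (hKfs n)
      _ = ∑' m, ‖f m‖ := tsum_congr fun m => by rw [norm_mul, hKnorm, one_mul]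
  set Fp : ℤ × ℤ → ℂ := fun p => K p.1 p.2 * ((starRingEnd ℂ) (f p.1) * f p.2) with hFpdef
  have hprodsum : Summable (fun p : ℤ × ℤ => ‖f p.1‖ * ‖f p.2‖) :=
    hs.mul_of_nonneg hs (fun n => norm_nonneg _) (fun m => norm_nonneg _)
  have hFpnorm : ∀ p : ℤ × ℤ, ‖Fp p‖ = ‖f p.1‖ * ‖f p.2‖ := by
    intro p
    simp [hFpdef, norm_mul, hKnorm, RCLike.norm_conj]
  have hFs : Summable Fp := by
    apply Summable.of_norm
    exact hprodsum.congr fun p => (hFpnorm p).symm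
  -- Part B : real part of the double sum is zero
  have hinner : ∀ n, ∑' m, Fp (n, m) = (starRingEnd ℂ) (f n) * g n := by
    intro n
    simp only [hgdef]
    rw [← tsum_mul_left]
    apply tsum_congr
    intro m
    simp only [hFpdef]
    ring
  have hsumcg : Summable (fun n => (starRingEnd ℂ) (f n) * g n) := by
    apply Summable.of_norm
    apply Summable.of_nonneg_of_le (fun n => norm_nonneg _) (fun n => ?_)
      (hs.mul_right (∑' m, ‖f m‖))
    rw [norm_mul, RCLike.norm_conj]
    exact mul_le_mul_of_nonneg_left (hgnorm n) (norm_nonneg _)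
  have htermre : ∀ n, ((starRingEnd ℂ) (f n) * g n).re = 0 := by
    intro n
    rw [hfn n]
    have hc : Complex.I * (V n : ℂ) / (2 * (Real.sin θ : ℂ))
        = ((V n / (2 * Real.sin θ) : ℝ) : ℂ) * Complex.I := by
      push_cast; ring
    rw [hc]
    set a : ℝ := V n / (2 * Real.sin θ)
    have : (starRingEnd ℂ) ((a : ℂ) * Complex.I * g n) * g n
        = ((a * Complex.normSq (g n) : ℝ) : ℂ) * (-Complex.I) := by
      rw [map_mul, map_mul, Complex.conj_ofReal, Complex.conj_I]
      rw [show (a : ℂ) * -Complex.I * (starRingEnd ℂ) (g n) * g n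
        = (a : ℂ) * ((starRingEnd ℂ) (g n) * g n) * -Complex.I by ring]
      rw [show (starRingEnd ℂ) (g n) * g n = g n * (starRingEnd ℂ) (g n) by ring,
        Complex.mul_conj]
      push_cast
      ring
    rw [this]
    simp
  have hDre : (∑' p, Fp p).re = 0 := by
    rw [Summable.tsum_prod hFs]
    rw [tsum_congr hinner, Complex.re_tsum hsumcg]
    simp only [htermre]
    exact tsum_zero
  -- Part A : real part equals |C|^2 + |S|^2
  set C : ℂ := ∑' m : ℤ, (Real.cos (θ * m) : ℂ) * f m with hCdef
  set S : ℂ := ∑' m : ℤ, (Real.sin (θ * m) : ℂ) * f m with hSdef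
  have hbound : ∀ (c : ℝ) (x : ℂ), |c| ≤ 1 → ‖(c : ℂ) * x‖ ≤ ‖x‖ := by
    intro c x hc
    rw [norm_mul, Complex.norm_real]
    calc |c| * ‖x‖ ≤ 1 * ‖x‖ := by gcongr
      _ = ‖x‖ := one_mul _
  have hsc : Summable (fun m : ℤ => ‖(Real.cos (θ * (m:ℝ)) : ℂ) * f m‖) :=
    Summable.of_nonneg_of_le (fun m => norm_nonneg _)
      (fun m => hbound _ _ (Real.abs_cos_le_one _)) hs
  have hss : Summable (fun m : ℤ => ‖(Real.sin (θ * (m:ℝ)) : ℂ) * f m‖) :=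
    Summable.of_nonneg_of_le (fun m => norm_nonneg _)
      (fun m => hbound _ _ (Real.abs_sin_le_one _)) hs
  have hscc : Summable (fun m : ℤ => ‖(Real.cos (θ * (m:ℝ)) : ℂ) * (starRingEnd ℂ) (f m)‖) := by
    apply hsc.congr
    intro m
    simp [norm_mul, RCLike.norm_conj]
  have hssc : Summable (fun m : ℤ => ‖(Real.sin (θ * (m:ℝ)) : ℂ) * (starRingEnd ℂ) (f m)‖) := by
    apply hss.congr
    intro m
    simp [norm_mul, RCLike.norm_conj]
  set F1 : ℤ × ℤ → ℂ := fun p =>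
    ((Real.cos (θ * p.1) : ℂ) * (starRingEnd ℂ) (f p.1)) * ((Real.cos (θ * p.2) : ℂ) * f p.2)
    with hF1def
  set F2 : ℤ × ℤ → ℂ := fun p =>
    ((Real.sin (θ * p.1) : ℂ) * (starRingEnd ℂ) (f p.1)) * ((Real.sin (θ * p.2) : ℂ) * f p.2)
    with hF2def
  set F3 : ℤ × ℤ → ℂ := fun p =>
    -Complex.I * (((Real.sin (θ * ((|p.1 - p.2| : ℤ) : ℝ)) : ℝ) : ℂ)
      * ((starRingEnd ℂ) (f p.1) * f p.2)) with hF3def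
  have hsplit : ∀ p : ℤ × ℤ, Fp p = F1 p + F2 p + F3 p := by
    intro p
    simp only [hFpdef, hF1def, hF2def, hF3def]
    rw [hKexp p.1 p.2]
    push_cast
    ring
  have hF1s : Summable F1 := by
    apply Summable.of_norm
    apply Summable.of_nonneg_of_le (fun p => norm_nonneg _) (fun p => ?_) hprodsum
    simp only [hF1def, norm_mul, RCLike.norm_conj, Complex.norm_real]
    have h1 : |Real.cos (θ * p.1)| ≤ 1 := Real.abs_cos_le_one _
    have h2 : |Real.cos (θ * p.2)| ≤ 1 := Real.abs_cos_le_one _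
    calc |Real.cos (θ * p.1)| * ‖f p.1‖ * (|Real.cos (θ * p.2)| * ‖f p.2‖)
        ≤ 1 * ‖f p.1‖ * (1 * ‖f p.2‖) := by gcongr
      _ = ‖f p.1‖ * ‖f p.2‖ := by ring
  have hF2s : Summable F2 := by
    apply Summable.of_norm
    apply Summable.of_nonneg_of_le (fun p => norm_nonneg _) (fun p => ?_) hprodsum
    simp only [hF2def, norm_mul, RCLike.norm_conj, Complex.norm_real]
    have h1 : |Real.sin (θ * p.1)| ≤ 1 := Real.abs_sin_le_one _
    have h2 : |Real.sin (θ * p.2)| ≤ 1 := Real.abs_sin_le_one _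
    calc |Real.sin (θ * p.1)| * ‖f p.1‖ * (|Real.sin (θ * p.2)| * ‖f p.2‖)
        ≤ 1 * ‖f p.1‖ * (1 * ‖f p.2‖) := by gcongr
      _ = ‖f p.1‖ * ‖f p.2‖ := by ring
  have hF3s : Summable F3 := by
    have h := (hFs.sub hF1s).sub hF2s
    apply h.congr
    intro p
    rw [hsplit p]
    ring
  have hDsplit : ∑' p, Fp p = (∑' p, F1 p) + (∑' p, F2 p) + (∑' p, F3 p) := by
    rw [← Summable.tsum_add hF1s hF2s, ← Summable.tsum_add (hF1s.add hF2s) hF3s]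
    exact tsum_congr hsplit
  have hF1eq : ∑' p, F1 p = (starRingEnd ℂ) C * C := by
    rw [← tsum_mul_tsum_of_summable_norm hscc hsc]
    congr 1
    rw [hCdef, show ((starRingEnd ℂ) (∑' m : ℤ, (Real.cos (θ * m) : ℂ) * f m))
      = star (∑' m : ℤ, (Real.cos (θ * m) : ℂ) * f m) from rfl, tsum_star]
    apply tsum_congr
    intro m
    simp only [star_mul', Complex.star_def, Complex.conj_ofReal]
  have hF2eq : ∑' p, F2 p = (starRingEnd ℂ) S * S := by
    rw [← tsum_mul_tsum_of_summable_norm hssc hss]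
    congr 1
    rw [hSdef, show ((starRingEnd ℂ) (∑' m : ℤ, (Real.sin (θ * m) : ℂ) * f m))
      = star (∑' m : ℤ, (Real.sin (θ * m) : ℂ) * f m) from rfl, tsum_star]
    apply tsum_congr
    intro m
    simp only [star_mul', Complex.star_def, Complex.conj_ofReal]
  -- the sin-kernel sum is real
  set T : ℂ := ∑' p : ℤ × ℤ, ((Real.sin (θ * ((|p.1 - p.2| : ℤ) : ℝ)) : ℝ) : ℂ)
      * ((starRingEnd ℂ) (f p.1) * f p.2) with hTdef
  have hF3eq : ∑' p, F3 p = -Complex.I * T := by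
    rw [hTdef, ← tsum_mul_left]
  have hTreal : (starRingEnd ℂ) T = T := by
    rw [hTdef, show ∀ z : ℂ, (starRingEnd ℂ) z = star z from fun z => rfl, tsum_star]
    rw [← (Equiv.prodComm ℤ ℤ).tsum_eq]
    apply tsum_congr
    intro p
    simp only [Equiv.prodComm_apply, Prod.fst_swap, Prod.snd_swap]
    rw [show |p.2 - p.1| = |p.1 - p.2| from abs_sub_comm _ _]
    simp only [star_mul', Complex.star_def, map_mul, Complex.conj_conj, Complex.conj_ofReal]
    ring
  have hTim : T.im = 0 := by
    have := Complex.conj_eq_iff_im.mp hTreal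
    exact this
  have hF3re : (∑' p, F3 p).re = 0 := by
    rw [hF3eq]
    simp [Complex.mul_re, hTim]
  -- combine
  have hCre : ((starRingEnd ℂ) C * C).re = Complex.normSq C := by
    rw [mul_comm, Complex.mul_conj, Complex.ofReal_re]
  have hSre : ((starRingEnd ℂ) S * S).re = Complex.normSq S := by
    rw [mul_comm, Complex.mul_conj, Complex.ofReal_re]
  have hzero : Complex.normSq C + Complex.normSq S = 0 := by
    have := hDre
    rw [hDsplit] at this
    simp only [Complex.add_re, hF1eq, hF2eq, hCre, hSre, hF3re] at this
    linarith [this]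
  have hC0 : Complex.normSq C = 0 := by
    have h1 := Complex.normSq_nonneg C
    have h2 := Complex.normSq_nonneg S
    linarith
  have hS0 : Complex.normSq S = 0 := by
    have h1 := Complex.normSq_nonneg C
    have h2 := Complex.normSq_nonneg S
    linarith
  exact ⟨Complex.normSq_eq_zero.mp hC0, Complex.normSq_eq_zero.mp hS0⟩
end
end
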